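/- arXiv:1301.0810 — 2 statements merged into one kernel-verified Lean document; each statement's English description precedes it below -/
import Mathlib

section
/- Let X be a finite-dimensional real normed space and K ⊂ X a pointed closed convex cone with nonempty interior. Then the function F_A : K → ℝ₊, F_A(x) := max{t ≥ 0 : x ∈ tA} (convention 0·A := K), is continuous on K for every set A ⊂ X satisfying condition (H) with this K, if and only if K is polyhedral (i.e. K is the intersection of finitely many closed half-spaces {x : ⟨x, x_i*⟩ ≥ 0}). -/
open Set Filter Topology Pointwise
open scoped Classical


section Fincone

variable {V : Type*} [AddCommGroup V] [Module ℝ V]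

def fincone (G : Finset V) : Set V :=
  {x | ∃ c : V → ℝ, (∀ g, 0 ≤ c g) ∧ ∑ g ∈ G, c g • g = x}

lemma fincone_zero_mem (G : Finset V) : (0 : V) ∈ fincone G :=
  ⟨fun _ => 0, fun _ => le_rfl, by simp⟩

lemma fincone_subset {G : Finset V} {S : Set V} (h0 : (0:V) ∈ S)
    (hadd : ∀ x ∈ S, ∀ y ∈ S, x + y ∈ S)
    (hsmul : ∀ t : ℝ, 0 ≤ t → ∀ x ∈ S, t • x ∈ S)
    (hG : ∀ g ∈ G, g ∈ S) : fincone G ⊆ S := by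
  rintro x ⟨c, hc, rfl⟩
  refine Finset.sum_induction _ (· ∈ S) (fun a b ha hb => hadd a ha b hb) h0 ?_
  exact fun g hg => hsmul (c g) (hc g) g (hG g hg)

lemma mem_fincone_of_mem {G : Finset V} {g : V} (hg : g ∈ G) : g ∈ fincone G := by
  refine ⟨fun v => if v = g then 1 else 0, fun v => by positivity, ?_⟩
  rw [Finset.sum_eq_single g]
  · simp
  · intro b _ hb; simp [hb]
  · intro h; exact absurd hg h

lemma fincone_add_mem {G : Finset V} {x y : V} (hx : x ∈ fincone G) (hy : y ∈ fincone G) :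
    x + y ∈ fincone G := by
  obtain ⟨c, hc, rfl⟩ := hx
  obtain ⟨d, hd, rfl⟩ := hy
  exact ⟨c + d, fun g => add_nonneg (hc g) (hd g), by
    simp [add_smul, Finset.sum_add_distrib]⟩

lemma fincone_smul_mem {G : Finset V} {x : V} {t : ℝ} (ht : 0 ≤ t) (hx : x ∈ fincone G) :
    t • x ∈ fincone G := by
  obtain ⟨c, hc, rfl⟩ := hx
  exact ⟨fun g => t * c g, fun g => mul_nonneg ht (hc g), by
    rw [Finset.smul_sum]; simp [mul_smul]⟩

/-- Fourier–Motzkin: the intersection of a finitely generated cone with a half-space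
is finitely generated. -/
theorem fincone_inter_halfspace (G : Finset V) (ℓ : V →ₗ[ℝ] ℝ) :
    ∃ G' : Finset V, fincone G ∩ {x | 0 ≤ ℓ x} = fincone G' := by
  set Gpos : Finset V := G.filter (fun g => 0 ≤ ℓ g) with hGposdef
  set Gpair : Finset V := ((G ×ˢ G).filter (fun p => 0 ≤ ℓ p.1 ∧ ℓ p.2 < 0)).image
      (fun p => ℓ p.1 • p.2 - ℓ p.2 • p.1) with hGpairdef
  refine ⟨Gpos ∪ Gpair, ?_⟩
  apply Set.Subset.antisymm
  · -- hard direction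
    rintro x ⟨hxG, hxl⟩
    obtain ⟨c, hc, rfl⟩ := hxG
    simp only [Set.mem_setOf_eq] at hxl
    -- the inductive claim
    suffices H : ∀ n : ℕ, ∀ c : V → ℝ, (∀ g, 0 ≤ c g) →
        0 ≤ ℓ (∑ g ∈ G, c g • g) →
        (G.filter fun h => 0 < c h ∧ ℓ h < 0).card * (G.card + 1)
          + (G.filter fun g => 0 < c g ∧ 0 < ℓ g).card ≤ n →
        (∑ g ∈ G, c g • g) ∈ fincone (Gpos ∪ Gpair) by
      exact H _ c hc hxl le_rfl
    intro n
    induction n with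
    | zero =>
      intro c hc hcl hm
      have hneg : (G.filter fun h => 0 < c h ∧ ℓ h < 0) = ∅ := by
        have h0 : (G.filter fun h => 0 < c h ∧ ℓ h < 0).card * (G.card + 1) = 0 :=
          Nat.eq_zero_of_le_zero (le_trans (Nat.le_add_right _ _) hm)
        rcases Nat.mul_eq_zero.1 h0 with h | h
        · exact Finset.card_eq_zero.1 h
        · omega
      -- base case: all weights with negative ℓ vanish
      refine Finset.sum_induction _ (· ∈ fincone (Gpos ∪ Gpair))
        (fun a b ha hb => fincone_add_mem ha hb) (fincone_zero_mem _) ?_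
      intro g hg
      rcases (hc g).lt_or_eq with hcg | hcg
      · have hlg : 0 ≤ ℓ g := by
          by_contra hlg
          have : g ∈ (G.filter fun h => 0 < c h ∧ ℓ h < 0) :=
            Finset.mem_filter.2 ⟨hg, hcg, lt_of_not_ge hlg⟩
          rw [hneg] at this; exact absurd this (Finset.notMem_empty g)
        exact fincone_smul_mem (le_of_lt hcg)
          (mem_fincone_of_mem (Finset.mem_union_left _ (Finset.mem_filter.2 ⟨hg, hlg⟩)))
      · rw [← hcg, zero_smul]; exact fincone_zero_mem _
    | succ n IH =>
      intro c hc hcl hm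
      rcases Finset.eq_empty_or_nonempty (G.filter fun h => 0 < c h ∧ ℓ h < 0) with hneg | hneg
      · -- same base case
        refine Finset.sum_induction _ (· ∈ fincone (Gpos ∪ Gpair))
          (fun a b ha hb => fincone_add_mem ha hb) (fincone_zero_mem _) ?_
        intro g hg
        rcases (hc g).lt_or_eq with hcg | hcg
        · have hlg : 0 ≤ ℓ g := by
            by_contra hlg
            have : g ∈ (G.filter fun h => 0 < c h ∧ ℓ h < 0) :=
              Finset.mem_filter.2 ⟨hg, hcg, lt_of_not_ge hlg⟩
            rw [hneg] at this; exact absurd this (Finset.notMem_empty g)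
          exact fincone_smul_mem (le_of_lt hcg)
            (mem_fincone_of_mem (Finset.mem_union_left _ (Finset.mem_filter.2 ⟨hg, hlg⟩)))
        · rw [← hcg, zero_smul]; exact fincone_zero_mem _
      · obtain ⟨h, hh⟩ := hneg
        obtain ⟨hhG, hch, hlh⟩ := Finset.mem_filter.1 hh
        -- find a strictly positive generator
        have hsum : ∑ g ∈ G, c g * ℓ g = ℓ (∑ g ∈ G, c g • g) := by
          rw [map_sum]; refine Finset.sum_congr rfl fun g _ => ?_
          rw [map_smul, smul_eq_mul]
        have hex : ∃ g ∈ G, 0 < c g * ℓ g := by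
          by_contra hax
          push_neg at hax
          have hlt : ∑ g ∈ G, c g * ℓ g < ∑ g ∈ G, (0:ℝ) := by
            refine Finset.sum_lt_sum (fun i hi => hax i hi) ⟨h, hhG, ?_⟩
            exact mul_neg_of_pos_of_neg hch hlh
          rw [Finset.sum_const_zero, hsum] at hlt
          exact absurd hcl (not_le.2 hlt)
        obtain ⟨g, hgG, hgpos⟩ := hex
        rcases mul_pos_iff.1 hgpos with ⟨hcg, hlg⟩ | ⟨hcg, _⟩
        swap
        · exact absurd hcg (not_lt.2 (hc g))
        have hgh : g ≠ h := fun h' => absurd hlg (by rw [h']; exact not_lt.2 (le_of_lt hlh))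
        set s : ℝ := min (c h / ℓ g) (c g / (-ℓ h)) with hsdef
        have hspos : 0 < s := lt_min (div_pos hch hlg) (div_pos hcg (neg_pos.2 hlh))
        set w : V := ℓ g • h - ℓ h • g with hwdef
        have hwmem : w ∈ Gpair := by
          rw [hGpairdef]
          exact Finset.mem_image.2 ⟨(g, h),
            Finset.mem_filter.2 ⟨Finset.mem_product.2 ⟨hgG, hhG⟩, le_of_lt hlg, hlh⟩, rfl⟩
        have hlw : ℓ w = 0 := by
          rw [hwdef, map_sub, map_smul, map_smul, smul_eq_mul, smul_eq_mul]; ring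
        set c' : V → ℝ := fun v => if v = g then c g + s * ℓ h else if v = h then c h - s * ℓ g
          else c v with hc'def
        have hc'g : c' g = c g + s * ℓ h := by simp [hc'def]
        have hc'h : c' h = c h - s * ℓ g := by simp [hc'def, hgh.symm]
        have hc'other : ∀ v, v ≠ g → v ≠ h → c' v = c v := by
          intro v hvg hvh; simp [hc'def, hvg, hvh]
        have hc' : ∀ v, 0 ≤ c' v := by
          intro v
          by_cases hvg : v = g
          · rw [hvg, hc'g]
            have : s * (-ℓ h) ≤ c g := by
              rw [← le_div_iff₀ (neg_pos.2 hlh)]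
              exact min_le_right _ _
            nlinarith
          · by_cases hvh : v = h
            · rw [hvh, hc'h]
              have : s * ℓ g ≤ c h := by
                rw [← le_div_iff₀ hlg]
                exact min_le_left _ _
              linarith
            · rw [hc'other v hvg hvh]; exact hc v
        -- decomposition of sums
        have hdecomp : ∀ d : V → ℝ, ∑ v ∈ G, d v • v
            = d h • h + d g • g + ∑ v ∈ (G.erase h).erase g, d v • v := by
          intro d
          rw [← Finset.add_sum_erase G _ hhG,
            ← Finset.add_sum_erase (G.erase h) (fun v => d v • v)
              (Finset.mem_erase.2 ⟨hgh, hgG⟩)]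
          abel
        have hrest : ∑ v ∈ (G.erase h).erase g, c' v • v = ∑ v ∈ (G.erase h).erase g, c v • v := by
          refine Finset.sum_congr rfl fun v hv => ?_
          obtain ⟨hvg, hv2⟩ := Finset.mem_erase.1 hv
          obtain ⟨hvh, _⟩ := Finset.mem_erase.1 hv2
          rw [hc'other v hvg hvh]
        have hsumeq : ∑ v ∈ G, c v • v = (∑ v ∈ G, c' v • v) + s • w := by
          rw [hdecomp c, hdecomp c', hrest, hc'g, hc'h, hwdef]
          rw [smul_sub, smul_smul, smul_smul, sub_smul, add_smul]
          abel
        have hcl' : 0 ≤ ℓ (∑ v ∈ G, c' v • v) := by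
          have : ℓ (∑ v ∈ G, c v • v) = ℓ (∑ v ∈ G, c' v • v) + s * ℓ w := by
            rw [hsumeq, map_add, map_smul, smul_eq_mul]
          rw [hlw, mul_zero, add_zero] at this
          rw [← this]; exact hcl
        -- measure decreases
        have hposs : (G.filter fun g => 0 < c g ∧ 0 < ℓ g).card ≤ G.card :=
          Finset.card_le_card (Finset.filter_subset _ _)
        have hposs' : (G.filter fun g => 0 < c' g ∧ 0 < ℓ g).card ≤ G.card :=
          Finset.card_le_card (Finset.filter_subset _ _)
        have hfinal : (∑ v ∈ G, c' v • v) ∈ fincone (Gpos ∪ Gpair) := by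
          rcases min_cases (c h / ℓ g) (c g / (-ℓ h)) with ⟨hmin, _⟩ | ⟨hmin, _⟩
          · -- s = c h / ℓ g : h gets eliminated
            have hc'h0 : c' h = 0 := by
              rw [hc'h, hsdef, hmin, div_mul_cancel₀ _ (ne_of_gt hlg), sub_self]
            have hsubneg : (G.filter fun v => 0 < c' v ∧ ℓ v < 0)
                ⊆ (G.filter fun v => 0 < c v ∧ ℓ v < 0).erase h := by
              intro v hv
              obtain ⟨hvG, hvc, hvl⟩ := Finset.mem_filter.1 hv
              have hvh : v ≠ h := fun h' => by rw [h', hc'h0] at hvc; exact lt_irrefl 0 hvc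
              have hvg : v ≠ g := fun h' => by rw [h'] at hvl; exact absurd hlg (not_lt.2 (le_of_lt hvl))
              rw [hc'other v hvg hvh] at hvc
              exact Finset.mem_erase.2 ⟨hvh, Finset.mem_filter.2 ⟨hvG, hvc, hvl⟩⟩
            have hcard : (G.filter fun v => 0 < c' v ∧ ℓ v < 0).card + 1
                ≤ (G.filter fun v => 0 < c v ∧ ℓ v < 0).card := by
              have h1 : (G.filter fun v => 0 < c' v ∧ ℓ v < 0).card
                  ≤ ((G.filter fun v => 0 < c v ∧ ℓ v < 0).erase h).card :=
                Finset.card_le_card hsubneg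
              have h2 : h ∈ (G.filter fun v => 0 < c v ∧ ℓ v < 0) := hh
              have h3 := Finset.card_erase_of_mem h2
              have h4 : 1 ≤ (G.filter fun v => 0 < c v ∧ ℓ v < 0).card :=
                Finset.card_pos.2 ⟨h, h2⟩
              omega
            refine IH c' hc' hcl' ?_
            have hnegc : 1 ≤ (G.filter fun v => 0 < c v ∧ ℓ v < 0).card :=
              Finset.card_pos.2 ⟨h, hh⟩
            nlinarith [hm, hposs', hcard, hnegc]
          · -- s = c g / (-ℓ h) : g gets eliminated
            have hc'g0 : c' g = 0 := by
              rw [hc'g, hsdef, hmin]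
              have h1 : c g / -ℓ h * -ℓ h = c g :=
                div_mul_cancel₀ _ (ne_of_gt (neg_pos.2 hlh))
              rw [mul_neg] at h1
              linarith
            have hsubneg : (G.filter fun v => 0 < c' v ∧ ℓ v < 0)
                ⊆ (G.filter fun v => 0 < c v ∧ ℓ v < 0) := by
              intro v hv
              obtain ⟨hvG, hvc, hvl⟩ := Finset.mem_filter.1 hv
              have hvg : v ≠ g := fun h' => by rw [h', hc'g0] at hvc; exact lt_irrefl 0 hvc
              by_cases hvh : v = h
              · exact Finset.mem_filter.2 ⟨hvG, by rw [hvh]; exact hch, by rw [hvh]; exact hlh⟩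
              · rw [hc'other v hvg hvh] at hvc
                exact Finset.mem_filter.2 ⟨hvG, hvc, hvl⟩
            have hsubpos : (G.filter fun v => 0 < c' v ∧ 0 < ℓ v)
                ⊆ (G.filter fun v => 0 < c v ∧ 0 < ℓ v).erase g := by
              intro v hv
              obtain ⟨hvG, hvc, hvl⟩ := Finset.mem_filter.1 hv
              have hvg : v ≠ g := fun h' => by rw [h', hc'g0] at hvc; exact lt_irrefl 0 hvc
              have hvh : v ≠ h := fun h' => by rw [h'] at hvl; exact absurd hvl (not_lt.2 (le_of_lt hlh))
              rw [hc'other v hvg hvh] at hvc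
              exact Finset.mem_erase.2 ⟨hvg, Finset.mem_filter.2 ⟨hvG, hvc, hvl⟩⟩
            have hcardneg : (G.filter fun v => 0 < c' v ∧ ℓ v < 0).card
                ≤ (G.filter fun v => 0 < c v ∧ ℓ v < 0).card :=
              Finset.card_le_card hsubneg
            have hgpos : g ∈ (G.filter fun v => 0 < c v ∧ 0 < ℓ v) :=
              Finset.mem_filter.2 ⟨hgG, hcg, hlg⟩
            have hcardpos : (G.filter fun v => 0 < c' v ∧ 0 < ℓ v).card + 1
                ≤ (G.filter fun v => 0 < c v ∧ 0 < ℓ v).card := by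
              have h1 := Finset.card_le_card hsubpos
              have h3 := Finset.card_erase_of_mem hgpos
              have h4 : 1 ≤ (G.filter fun v => 0 < c v ∧ 0 < ℓ v).card :=
                Finset.card_pos.2 ⟨g, hgpos⟩
              omega
            refine IH c' hc' hcl' ?_
            nlinarith [hm, hcardneg, hcardpos]
        rw [hsumeq]
        exact fincone_add_mem hfinal
          (fincone_smul_mem (le_of_lt hspos)
            (mem_fincone_of_mem (Finset.mem_union_right _ hwmem)))
  · -- easy direction
    refine fincone_subset ⟨fincone_zero_mem G, by simp⟩
      (fun x hx y hy => ⟨fincone_add_mem hx.1 hy.1, ?_⟩)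
      (fun t ht x hx => ⟨fincone_smul_mem ht hx.1, ?_⟩) ?_
    · simp only [Set.mem_setOf_eq, map_add]
      exact add_nonneg hx.2 hy.2
    · simp only [Set.mem_setOf_eq, map_smul, smul_eq_mul]
      exact mul_nonneg ht hx.2
    · intro v hv
      rcases Finset.mem_union.1 hv with hv | hv
      · obtain ⟨hvG, hvl⟩ := Finset.mem_filter.1 hv
        exact ⟨mem_fincone_of_mem hvG, hvl⟩
      · obtain ⟨⟨p, q⟩, hpq, rfl⟩ := Finset.mem_image.1 hv
        obtain ⟨hpq', hlp, hlq⟩ := Finset.mem_filter.1 hpq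
        obtain ⟨hpG, hqG⟩ := Finset.mem_product.1 hpq'
        constructor
        · have : ℓ p • q - ℓ q • p = ℓ p • q + (-ℓ q) • p := by
            rw [neg_smul, sub_eq_add_neg]
          rw [this]
          exact fincone_add_mem (fincone_smul_mem hlp (mem_fincone_of_mem hqG))
            (fincone_smul_mem (neg_pos.2 hlq).le (mem_fincone_of_mem hpG))
        · simp only [Set.mem_setOf_eq, map_sub, map_smul, smul_eq_mul]
          nlinarith

end Fincone

section FinconeUniv

variable (V : Type*) [AddCommGroup V] [Module ℝ V] [FiniteDimensional ℝ V]

theorem fincone_univ : ∃ G : Finset V, fincone G = Set.univ := by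
  classical
  set b := Module.finBasis ℝ V with hb
  refine ⟨(Finset.univ.image b) ∪ (Finset.univ.image (fun i => -(b i))), ?_⟩
  refine Set.eq_univ_of_forall fun x => ?_
  have hx : ∑ i, b.repr x i • b i = x := b.sum_repr x
  rw [← hx]
  refine Finset.sum_induction _ (· ∈ fincone _)
    (fun a b ha hb => fincone_add_mem ha hb) (fincone_zero_mem _) ?_
  intro i _
  rcases le_or_gt 0 (b.repr x i) with hr | hr
  · exact fincone_smul_mem hr (mem_fincone_of_mem
      (Finset.mem_union_left _ (Finset.mem_image.2 ⟨i, Finset.mem_univ i, rfl⟩)))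
  · have : b.repr x i • b i = (-(b.repr x i)) • (-(b i)) := by
      rw [neg_smul, smul_neg, neg_neg]
    rw [this]
    exact fincone_smul_mem (by linarith) (mem_fincone_of_mem
      (Finset.mem_union_right _ (Finset.mem_image.2 ⟨i, Finset.mem_univ i, rfl⟩)))

theorem halfspaces_fincone (S : Finset (V →ₗ[ℝ] ℝ)) :
    ∃ G : Finset V, {x : V | ∀ ℓ ∈ S, 0 ≤ ℓ x} = fincone G := by
  classical
  induction S using Finset.induction_on with
  | empty =>
    obtain ⟨G, hG⟩ := fincone_univ V
    exact ⟨G, by simp [hG]⟩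
  | @insert ℓ₀ s hℓ₀ IH =>
    obtain ⟨G, hG⟩ := IH
    obtain ⟨G', hG'⟩ := fincone_inter_halfspace G ℓ₀
    refine ⟨G', ?_⟩
    rw [← hG']
    ext x
    simp only [Finset.mem_insert, Set.mem_setOf_eq, Set.mem_inter_iff, ← hG]
    constructor
    · intro h
      exact ⟨fun ℓ hl => h ℓ (Or.inr hl), h ℓ₀ (Or.inl rfl)⟩
    · rintro ⟨h1, h2⟩ ℓ (rfl | hl)
      · exact h2
      · exact h1 ℓ hl

end FinconeUniv

variable {X : Type*} [NormedAddCommGroup X] [NormedSpace ℝ X]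

/-- The set `t·A`, with the convention `0·A := K`. -/
noncomputable def scaled (K A : Set X) (t : ℝ) : Set X := if t = 0 then K else t • A

/-- `F_A(x) := max {t ≥ 0 : x ∈ tA}` (with the convention `0·A := K`), realized as a
supremum; under condition (H) the set `{t ≥ 0 : x ∈ tA}` is a compact interval
containing `0`, so the supremum is a maximum. -/
noncomputable def FA (K A : Set X) (x : X) : ℝ :=
  sSup {t : ℝ | 0 ≤ t ∧ x ∈ scaled K A t}

/-- `ℙA = {t • a : t > 0, a ∈ A}`. -/
def posScaled (A : Set X) : Set X := {x | ∃ t : ℝ, 0 < t ∧ ∃ a ∈ A, x = t • a}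

section Cont

variable {K A : Set X}

lemma mem_scaled_pos {t : ℝ} (ht : 0 < t) {x : X} :
    x ∈ scaled K A t ↔ t⁻¹ • x ∈ A := by
  rw [scaled, if_neg (ne_of_gt ht)]
  exact (mem_smul_set_iff_inv_smul_mem₀ (ne_of_gt ht) _ _)

lemma mem_scaled_zero {x : X} : x ∈ scaled K A 0 ↔ x ∈ K := by
  rw [scaled, if_pos rfl]

/-- A lower norm bound on `A`. -/
lemma exists_dbound (hAcl : IsClosed A) (h0 : (0:X) ∉ A) :
    ∃ d : ℝ, 0 < d ∧ ∀ a ∈ A, d ≤ ‖a‖ := by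
  have hopen : Aᶜ ∈ 𝓝 (0:X) := hAcl.isOpen_compl.mem_nhds h0
  obtain ⟨ε, hε, hball⟩ := Metric.mem_nhds_iff.1 hopen
  refine ⟨ε, hε, fun a ha => ?_⟩
  by_contra h
  exact hball (by rwa [Metric.mem_ball, dist_zero_right, ← not_le]) ha

lemma scaled_le_bound {d : ℝ} (hd : 0 < d) (hdA : ∀ a ∈ A, d ≤ ‖a‖)
    {x : X} {t : ℝ} (ht : t ∈ {t : ℝ | 0 ≤ t ∧ x ∈ scaled K A t}) : t ≤ ‖x‖ / d := by
  obtain ⟨ht0, hts⟩ := ht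
  rcases ht0.eq_or_lt with rfl | htpos
  · positivity
  · rw [scaled, if_neg (ne_of_gt htpos)] at hts
    obtain ⟨a, ha, rfl⟩ := hts
    rw [norm_smul, Real.norm_eq_abs, abs_of_pos htpos]
    rw [le_div_iff₀ hd]
    have := hdA a ha
    nlinarith

lemma bddAbove_FAset {d : ℝ} (hd : 0 < d) (hdA : ∀ a ∈ A, d ≤ ‖a‖) (x : X) :
    BddAbove {t : ℝ | 0 ≤ t ∧ x ∈ scaled K A t} :=
  ⟨‖x‖ / d, fun t ht => scaled_le_bound hd hdA ht⟩

lemma zero_mem_FAset {x : X} (hx : x ∈ K) : (0:ℝ) ∈ {t : ℝ | 0 ≤ t ∧ x ∈ scaled K A t} :=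
  ⟨le_rfl, mem_scaled_zero.2 hx⟩

lemma FA_nonneg {d : ℝ} (hd : 0 < d) (hdA : ∀ a ∈ A, d ≤ ‖a‖) {x : X} (hx : x ∈ K) :
    0 ≤ FA K A x :=
  le_csSup (bddAbove_FAset hd hdA x) (zero_mem_FAset hx)

/-- Downward closedness of the membership set. -/
lemma scaled_mem_of_le (hKcone : ∀ t : ℝ, 0 ≤ t → ∀ x ∈ K, t • x ∈ K)
    (hAK : A + K = A) (hAsub : A ⊆ K \ {0})
    {x : X} {s t : ℝ} (hs : 0 < s) (hst : s ≤ t) (hxt : t⁻¹ • x ∈ A) : s⁻¹ • x ∈ A := by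
  have htpos : 0 < t := lt_of_lt_of_le hs hst
  set a : X := t⁻¹ • x with hadef
  have hxa : x = t • a := by rw [hadef, smul_smul, mul_inv_cancel₀ (ne_of_gt htpos), one_smul]
  have h1 : s⁻¹ • x = (s⁻¹ * t) • a := by rw [hxa, smul_smul]
  have h2 : (1:ℝ) ≤ s⁻¹ * t := by
    rw [← div_eq_inv_mul, le_div_iff₀ hs]; linarith
  have h3 : (s⁻¹ * t) • a = a + (s⁻¹ * t - 1) • a := by
    rw [sub_smul, one_smul]; abel
  rw [h1, h3, ← hAK]
  exact Set.add_mem_add hxt (hKcone _ (by linarith) _ (hAsub hxt).1)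

/-- The supremum is attained. -/
lemma FA_mem_FAset (hKcone : ∀ t : ℝ, 0 ≤ t → ∀ x ∈ K, t • x ∈ K)
    (hAcl : IsClosed A) (hAK : A + K = A) (hAsub : A ⊆ K \ {0})
    {d : ℝ} (hd : 0 < d) (hdA : ∀ a ∈ A, d ≤ ‖a‖)
    {x : X} (hx : x ∈ K) : 0 ≤ FA K A x ∧ x ∈ scaled K A (FA K A x) := by
  have hbdd := bddAbove_FAset (K := K) hd hdA x
  have hne : {t : ℝ | 0 ≤ t ∧ x ∈ scaled K A t}.Nonempty := ⟨0, zero_mem_FAset hx⟩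
  have hT0 : 0 ≤ FA K A x := FA_nonneg hd hdA hx
  refine ⟨hT0, ?_⟩
  rcases hT0.eq_or_lt with hT | hT
  · rw [← hT]; exact mem_scaled_zero.2 hx
  · set T := FA K A x with hTdef
    rw [mem_scaled_pos hT]
    have hclaim : ∀ s : ℝ, 0 < s → s < T → s⁻¹ • x ∈ A := by
      intro s hs hsT
      obtain ⟨t, htmem, hst⟩ := exists_lt_of_lt_csSup hne hsT
      have htpos : 0 < t := lt_trans hs hst
      have := htmem.2
      rw [mem_scaled_pos htpos] at this
      exact scaled_mem_of_le hKcone hAK hAsub hs (le_of_lt hst) this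
    set u : ℕ → ℝ := fun n => T - T / (n + 2) with hudef
    have hupos : ∀ n : ℕ, 0 < u n := by
      intro n
      have h1 : T / ((n:ℝ) + 2) < T := by
        apply div_lt_self hT
        have : (0:ℝ) ≤ (n:ℝ) := Nat.cast_nonneg n
        linarith
      simp only [hudef]; linarith
    have huT : ∀ n : ℕ, u n < T := by
      intro n
      have h2 : 0 < T / ((n:ℝ) + 2) := by positivity
      simp only [hudef]; linarith
    have humem : ∀ n : ℕ, (u n)⁻¹ • x ∈ A := fun n => hclaim _ (hupos n) (huT n)
    have hulim : Tendsto u atTop (𝓝 T) := by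
      have h1 : Tendsto (fun n : ℕ => T / ((n:ℝ) + 2)) atTop (𝓝 0) := by
        apply Tendsto.div_atTop tendsto_const_nhds
        exact tendsto_atTop_add_const_right atTop 2 tendsto_natCast_atTop_atTop
      have := tendsto_const_nhds (x := T) (f := atTop (α := ℕ)) |>.sub h1
      simpa using this
    have hlim : Tendsto (fun n => (u n)⁻¹ • x) atTop (𝓝 (T⁻¹ • x)) :=
      (hulim.inv₀ (ne_of_gt hT)).smul_const x
    exact hAcl.mem_of_tendsto hlim (Eventually.of_forall humem)

end Cont

section ContMain

variable {K A : Set X}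

theorem continuousOn_FA_of_polyhedral [FiniteDimensional ℝ X]
    (hKcone : ∀ t : ℝ, 0 ≤ t → ∀ x ∈ K, t • x ∈ K)
    (hKpointed : K ∩ (-K) = {0})
    {m : ℕ} {φ : Fin m → (X →L[ℝ] ℝ)} (hK : K = {x : X | ∀ i, 0 ≤ φ i x})
    (hAne : A.Nonempty) (hAcl : IsClosed A) (hAK : A + K = A) (hAsub : A ⊆ K \ {0}) :
    ContinuousOn (FA K A) K := by
  classical
  have h0A : (0:X) ∉ A := fun h => (hAsub h).2 rfl
  obtain ⟨d, hd, hdA⟩ := exists_dbound hAcl h0A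
  intro x hx
  haveI : (𝓝[K] x).NeBot := mem_closure_iff_nhdsWithin_neBot.1 (subset_closure hx)
  have hxmem := FA_mem_FAset hKcone hAcl hAK hAsub hd hdA hx
  rw [ContinuousWithinAt, tendsto_order]
  constructor
  · -- lower semicontinuity
    intro c hc
    rcases lt_or_ge c 0 with hc0 | hc0
    · filter_upwards [self_mem_nhdsWithin] with y hy
      exact lt_of_lt_of_le hc0 (FA_nonneg hd hdA hy)
    · set T := FA K A x with hTdef
      have hT : 0 < T := lt_of_le_of_lt hc0 hc
      have hxT : T⁻¹ • x ∈ A := by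
        have := hxmem.2
        rwa [mem_scaled_pos hT] at this
      set a : X := T⁻¹ • x with hadef
      have haK : a ∈ K := (hAsub hxT).1
      have ha0 : a ≠ 0 := (hAsub hxT).2
      have hxa : x = T • a := by
        rw [hadef, smul_smul, mul_inv_cancel₀ (ne_of_gt hT), one_smul]
      set I : Finset (Fin m) := Finset.univ.filter (fun i => 0 < φ i a) with hIdef
      have hmemI : ∀ j, j ∈ I ↔ 0 < φ j a := by
        intro j; rw [hIdef, Finset.mem_filter]; simp
      have hI : I.Nonempty := by
        by_contra hIe
        rw [Finset.not_nonempty_iff_eq_empty, Finset.eq_empty_iff_forall_notMem] at hIe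
        have hzero : ∀ i, φ i a = 0 := by
          intro i
          have h1 : 0 ≤ φ i a := by
            have := haK; rw [hK] at this; exact this i
          rcases h1.eq_or_lt with h | h
          · exact h.symm
          · exact absurd ((hmemI i).2 h) (hIe i)
        have hmaK : -a ∈ K := by
          rw [hK]; intro i; rw [map_neg, hzero i, neg_zero]
        have : a ∈ K ∩ (-K) := ⟨haK, by rwa [Set.mem_neg]⟩
        rw [hKpointed] at this
        exact ha0 this
      set g : X → ℝ := fun y => I.inf' hI (fun i => φ i y / φ i a) with hgdef
      have hgcont : Continuous g := by
        rw [continuous_iff_continuousAt]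
        intro y
        exact Filter.Tendsto.finset_inf'_nhds_apply hI
          (fun i _ => (((φ i).continuous.div_const (φ i a)).tendsto y))
      have hIpos : ∀ i ∈ I, 0 < φ i a := fun i hi => (hmemI i).1 hi
      have hgK : ∀ y ∈ K, y - g y • a ∈ K := by
        intro y hy
        rw [hK]
        intro j
        have hyj : 0 ≤ φ j y := by rw [hK] at hy; exact hy j
        simp only [map_sub, map_smul, smul_eq_mul]
        by_cases hj : j ∈ I
        · have h1 : g y ≤ φ j y / φ j a := Finset.inf'_le _ hj
          have h2 := hIpos j hj
          rw [le_div_iff₀ h2] at h1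
          linarith
        · have h1 : 0 ≤ φ j a := by rw [hK] at haK; exact haK j
          have h2 : φ j a = 0 := by
            rcases h1.eq_or_lt with h | h
            · exact h.symm
            · exact absurd ((hmemI j).2 h) hj
          rw [h2, mul_zero]; linarith
      have hg_nonneg : ∀ y ∈ K, 0 ≤ g y := by
        intro y hy
        refine Finset.le_inf' hI _ fun i hi => ?_
        have hyi : 0 ≤ φ i y := by rw [hK] at hy; exact hy i
        exact div_nonneg hyi (le_of_lt (hIpos i hi))
      have hgle : ∀ y ∈ K, g y ≤ FA K A y := by
        intro y hy
        rcases lt_or_ge 0 (g y) with hgy | hgy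
        · refine le_csSup (bddAbove_FAset hd hdA y) ⟨le_of_lt hgy, ?_⟩
          rw [mem_scaled_pos hgy]
          have heq : (g y)⁻¹ • y = a + (g y)⁻¹ • (y - g y • a) := by
            rw [smul_sub, smul_smul, inv_mul_cancel₀ (ne_of_gt hgy), one_smul]
            abel
          rw [heq, ← hAK]
          exact Set.add_mem_add hxT
            (hKcone _ (le_of_lt (inv_pos.2 hgy)) _ (hgK y hy))
        · exact le_trans hgy (FA_nonneg hd hdA hy)
      have hgx : g x = T := by
        refine le_antisymm (le_trans (hgle x hx) le_rfl) ?_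
        refine Finset.le_inf' hI _ fun i hi => ?_
        have h2 := hIpos i hi
        rw [hxa, map_smul, smul_eq_mul, mul_div_assoc, div_self (ne_of_gt h2), mul_one]
      have hopen : {y : X | c < g y} ∈ 𝓝 x := by
        have : IsOpen {y : X | c < g y} := isOpen_lt continuous_const hgcont
        exact this.mem_nhds (by rw [Set.mem_setOf_eq, hgx]; exact hc)
      filter_upwards [nhdsWithin_le_nhds hopen, self_mem_nhdsWithin] with y hy1 hy2
      exact lt_of_lt_of_le hy1 (hgle y hy2)
  · -- upper semicontinuity
    intro c hc
    by_contra hcon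
    rw [Filter.not_eventually] at hcon
    have hT0 : 0 ≤ FA K A x := hxmem.1
    have hc0 : 0 < c := lt_of_le_of_lt hT0 hc
    have hyn : ∀ n : ℕ, ∃ y, ¬ FA K A y < c ∧ y ∈ Metric.ball x (1/(n+1)) ∧ y ∈ K := by
      intro n
      have hmem : Metric.ball x (1/((n:ℝ)+1)) ∩ K ∈ 𝓝[K] x :=
        inter_mem (nhdsWithin_le_nhds (Metric.ball_mem_nhds x (by positivity)))
          self_mem_nhdsWithin
      obtain ⟨y, h1, h2⟩ := (hcon.and_eventually (eventually_of_mem hmem fun y hy => hy)).exists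
      exact ⟨y, h1, h2.1, h2.2⟩
    choose y hy1 hy2 hy3 using hyn
    have hylim : Tendsto y atTop (𝓝 x) := by
      rw [tendsto_iff_dist_tendsto_zero]
      refine squeeze_zero (fun n => dist_nonneg) (fun n => le_of_lt ?_)
        tendsto_one_div_add_atTop_nhds_zero_nat
      have := hy2 n
      rwa [Metric.mem_ball] at this
    set t : ℕ → ℝ := fun n => FA K A (y n) with htdef
    have htS : ∀ n, 0 ≤ t n ∧ y n ∈ scaled K A (t n) :=
      fun n => FA_mem_FAset hKcone hAcl hAK hAsub hd hdA (hy3 n)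
    have htc : ∀ n, c ≤ t n := fun n => not_lt.1 (hy1 n)
    set M : ℝ := (‖x‖ + 1) / d with hMdef
    have htM : ∀ n, t n ≤ M := by
      intro n
      have h1 : t n ≤ ‖y n‖ / d := scaled_le_bound hd hdA ⟨(htS n).1, (htS n).2⟩
      have h2 : ‖y n‖ ≤ ‖x‖ + 1 := by
        have h3 : dist (y n) x < 1/((n:ℝ)+1) := by
          have := hy2 n; rwa [Metric.mem_ball] at this
        have h4 : (1:ℝ)/((n:ℝ)+1) ≤ 1 := by
          rw [div_le_one (by positivity)]
          have : (0:ℝ) ≤ (n:ℝ) := Nat.cast_nonneg n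
          linarith
        calc ‖y n‖ = ‖x + (y n - x)‖ := by
              rw [show x + (y n - x) = y n by abel]
          _ ≤ ‖x‖ + ‖y n - x‖ := norm_add_le _ _
          _ = ‖x‖ + dist (y n) x := by rw [dist_eq_norm]
          _ ≤ ‖x‖ + 1 := by linarith
      calc t n ≤ ‖y n‖ / d := h1
        _ ≤ M := by rw [hMdef]; gcongr
    have htIcc : ∀ n, t n ∈ Set.Icc c M := fun n => ⟨htc n, htM n⟩
    obtain ⟨s, hsIcc, σ, hσ, hts⟩ := isCompact_Icc.tendsto_subseq htIcc
    have hs0 : 0 < s := lt_of_lt_of_le hc0 hsIcc.1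
    have hamem : ∀ n, (t (σ n))⁻¹ • (y (σ n)) ∈ A := by
      intro n
      have h1 := (htS (σ n)).2
      have h2 : 0 < t (σ n) := lt_of_lt_of_le hc0 (htc (σ n))
      rwa [mem_scaled_pos h2] at h1
    have halim : Tendsto (fun n => (t (σ n))⁻¹ • (y (σ n))) atTop (𝓝 (s⁻¹ • x)) := by
      refine Tendsto.smul (hts.inv₀ (ne_of_gt hs0)) ?_
      exact hylim.comp hσ.tendsto_atTop
    have hsx : s⁻¹ • x ∈ A := hAcl.mem_of_tendsto halim (Eventually.of_forall hamem)
    have hsS : s ∈ {t : ℝ | 0 ≤ t ∧ x ∈ scaled K A t} :=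
      ⟨le_of_lt hs0, (mem_scaled_pos hs0).2 hsx⟩
    have : s ≤ FA K A x := le_csSup (bddAbove_FAset hd hdA x) hsS
    have : c ≤ FA K A x := le_trans hsIcc.1 this
    linarith

end ContMain

section CompactHull

variable {E : Type*} [NormedAddCommGroup E] [NormedSpace ℝ E] [FiniteDimensional ℝ E]

theorem isCompact_convexHull' {s : Set E} (hs : IsCompact s) :
    IsCompact (convexHull ℝ s) := by
  classical
  rcases s.eq_empty_or_nonempty with rfl | ⟨s₀, hs₀⟩
  · rw [convexHull_empty]; exact isCompact_empty
  set N := Module.finrank ℝ E + 1 with hN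
  set Φ : (Fin N → ℝ) × (Fin N → E) → E := fun q => ∑ i, q.1 i • q.2 i with hΦdef
  have hΦ : Continuous Φ :=
    continuous_finset_sum _ fun i _ =>
      ((continuous_apply i).comp continuous_fst).smul ((continuous_apply i).comp continuous_snd)
  set T : Set ((Fin N → ℝ) × (Fin N → E)) :=
    (stdSimplex ℝ (Fin N)) ×ˢ (Set.univ.pi fun _ => s) with hTdef
  have hTc : IsCompact T := (isCompact_stdSimplex ℝ _).prod (isCompact_univ_pi fun _ => hs)
  have hclaim : convexHull ℝ s = Φ '' T := by
    apply Set.Subset.antisymm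
    · intro x hx
      obtain ⟨ι, hι, z, w, hzs, hai, hw0, hw1, hwx⟩ := eq_pos_convex_span_of_mem_convexHull hx
      letI := hι
      have hcard : Fintype.card ι ≤ N := by
        have h1 := hai.card_le_finrank_succ
        have h2 := Submodule.finrank_le (vectorSpan ℝ (Set.range z))
        omega
      obtain ⟨f⟩ : Nonempty (ι ↪ Fin N) :=
        Function.Embedding.nonempty_of_card_le (by simpa using hcard)
      set w' : Fin N → ℝ := fun j => if h : ∃ i, f i = j then w h.choose else 0 with hw'def
      set p' : Fin N → E := fun j => if h : ∃ i, f i = j then z h.choose else s₀ with hp'def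
      have hkey : ∀ i : ι, w' (f i) = w i ∧ p' (f i) = z i := by
        intro i
        have hex : ∃ i', f i' = f i := ⟨i, rfl⟩
        have hch : hex.choose = i := f.injective hex.choose_spec
        constructor
        · rw [hw'def]; simp only [dif_pos hex, hch]
        · rw [hp'def]; simp only [dif_pos hex, hch]
      have himg : ∀ (F : Fin N → ℝ) (P : Fin N → E),
          (∀ j, ¬(∃ i, f i = j) → F j = 0) → True := fun _ _ _ => trivial
      have hsub : (Finset.univ.image f : Finset (Fin N)) ⊆ Finset.univ := Finset.subset_univ _
      have hzero : ∀ j ∈ (Finset.univ : Finset (Fin N)),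
          j ∉ Finset.univ.image f → w' j • p' j = 0 ∧ w' j = 0 := by
        intro j _ hj
        have hne : ¬ ∃ i, f i = j := by
          intro ⟨i, hi⟩; exact hj (Finset.mem_image.2 ⟨i, Finset.mem_univ i, hi⟩)
        constructor
        · rw [hw'def]; simp only [dif_neg hne, zero_smul]
        · rw [hw'def]; simp only [dif_neg hne]
      have hinj : ∀ i ∈ (Finset.univ : Finset ι), ∀ i' ∈ Finset.univ, f i = f i' → i = i' :=
        fun i _ i' _ h => f.injective h
      have hsum1 : ∑ j, w' j = 1 := by
        rw [← Finset.sum_subset hsub (fun j hj hj' => (hzero j hj hj').2),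
          Finset.sum_image hinj]
        rw [← hw1]
        exact Finset.sum_congr rfl fun i _ => (hkey i).1
      have hsum2 : ∑ j, w' j • p' j = x := by
        rw [← Finset.sum_subset hsub (fun j hj hj' => (hzero j hj hj').1),
          Finset.sum_image hinj, ← hwx]
        refine Finset.sum_congr rfl fun i _ => ?_
        rw [(hkey i).1, (hkey i).2]
      refine ⟨(w', p'), ⟨⟨?_, hsum1⟩, ?_⟩, hsum2⟩
      · intro j
        rw [hw'def]
        by_cases h : ∃ i, f i = j
        · simp only [dif_pos h]; exact le_of_lt (hw0 _)
        · simp only [dif_neg h]; exact le_rfl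
      · intro j _
        rw [hp'def]
        by_cases h : ∃ i, f i = j
        · simp only [dif_pos h]; exact hzs ⟨_, rfl⟩
        · simp only [dif_neg h]; exact hs₀
    · rintro _ ⟨⟨ww, pp⟩, ⟨⟨hw0, hw1⟩, hp⟩, rfl⟩
      exact (convex_convexHull ℝ s).sum_mem (fun i _ => hw0 i) hw1
        (fun i _ => subset_convexHull ℝ s (hp i (Set.mem_univ i)))
  rw [hclaim]
  exact hTc.image hΦ

end CompactHull

section StrictPos

theorem exists_strict_pos_functional [FiniteDimensional ℝ X] {K : Set X}
    (hKclosed : IsClosed K) (hKconv : Convex ℝ K)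
    (hKcone : ∀ t : ℝ, 0 ≤ t → ∀ x ∈ K, t • x ∈ K)
    (hKpointed : K ∩ (-K) = {0}) :
    ∃ u : X →L[ℝ] ℝ, ∀ x ∈ K, x ≠ 0 → 0 < u x := by
  classical
  have hKadd : ∀ x ∈ K, ∀ y ∈ K, x + y ∈ K := by
    intro x hx y hy
    have h1 : (1/2 : ℝ) • x + (1/2 : ℝ) • y ∈ K :=
      hKconv hx hy (by norm_num) (by norm_num) (by norm_num)
    have h2 := hKcone 2 (by norm_num) _ h1
    have : (2:ℝ) • ((1/2 : ℝ) • x + (1/2 : ℝ) • y) = x + y := by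
      rw [smul_add, smul_smul, smul_smul]; norm_num
    rwa [this] at h2
  set s : Set X := K ∩ Metric.sphere 0 1 with hsdef
  have hscomp : IsCompact s := by
    rw [Metric.isCompact_iff_isClosed_bounded]
    exact ⟨hKclosed.inter Metric.isClosed_sphere,
      Metric.isBounded_sphere.subset Set.inter_subset_right⟩
  have hCc : IsCompact (convexHull ℝ s) := isCompact_convexHull' hscomp
  have h0 : (0:X) ∉ convexHull ℝ s := by
    intro h0
    rw [convexHull_eq] at h0
    obtain ⟨ι, t, w, z, hw0, hw1, hzs, hcm⟩ := h0
    rw [Finset.centerMass_eq_of_sum_1 _ _ hw1] at hcm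
    have hex : ∃ i ∈ t, w i ≠ 0 := by
      refine Finset.exists_ne_zero_of_sum_ne_zero ?_
      rw [hw1]; norm_num
    obtain ⟨i₀, hi₀t, hwi₀⟩ := hex
    have hsplit : w i₀ • z i₀ + ∑ i ∈ t.erase i₀, w i • z i = 0 :=
      (Finset.add_sum_erase t (fun i => w i • z i) hi₀t).trans hcm
    have hrest : ∑ i ∈ t.erase i₀, w i • z i ∈ K := by
      refine Finset.sum_induction _ (· ∈ K) (fun a b ha hb => hKadd a ha b hb) ?_ ?_
      · have := hKcone 0 le_rfl
        rcases Set.eq_empty_or_nonempty K with hKe | ⟨k, hk⟩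
        · -- K nonempty since... derive from hKpointed: 0 ∈ K
          exfalso
          have : (0:X) ∈ K ∩ (-K) := by rw [hKpointed]; rfl
          rw [hKe] at this; exact absurd this.1 (Set.notMem_empty 0)
        · have h00 := hKcone 0 le_rfl k hk
          rwa [zero_smul] at h00
      · intro i hi
        exact hKcone _ (hw0 i (Finset.mem_of_mem_erase hi)) _
          (hzs i (Finset.mem_of_mem_erase hi)).1
    have hneg : w i₀ • z i₀ ∈ K ∩ (-K) := by
      constructor
      · exact hKcone _ (hw0 i₀ hi₀t) _ (hzs i₀ hi₀t).1
      · rw [Set.mem_neg]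
        have : -(w i₀ • z i₀) = ∑ i ∈ t.erase i₀, w i • z i :=
          neg_eq_of_add_eq_zero_right hsplit
        rw [this]; exact hrest
    rw [hKpointed] at hneg
    have hz0 : z i₀ = 0 := by
      rcases smul_eq_zero.1 hneg with h | h
      · exact absurd h hwi₀
      · exact h
    have := (hzs i₀ hi₀t).2
    rw [hz0] at this
    simp at this
  obtain ⟨f, u, hfu, hu⟩ :=
    geometric_hahn_banach_closed_point (convex_convexHull ℝ s) hCc.isClosed h0
  have hu0 : u < 0 := by simpa using hu
  refine ⟨-f, fun x hx hx0 => ?_⟩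
  have hxs : ‖x‖⁻¹ • x ∈ s := by
    constructor
    · exact hKcone _ (inv_nonneg.2 (norm_nonneg x)) x hx
    · rw [mem_sphere_zero_iff_norm]
      exact norm_smul_inv_norm (𝕜 := ℝ) hx0
  have h1 := hfu _ (subset_convexHull ℝ s hxs)
  rw [map_smul, smul_eq_mul] at h1
  have h2 : ‖x‖⁻¹ * f x < 0 := lt_trans h1 hu0
  have h3 : f x < 0 := by
    have hn : 0 < ‖x‖⁻¹ := inv_pos.2 (norm_pos_iff.2 hx0)
    nlinarith
  rw [ContinuousLinearMap.neg_apply]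
  linarith

end StrictPos

section Converse

/-- Evaluation at a point, as a linear functional on the dual. -/
def evalAt (e : X) : (X →L[ℝ] ℝ) →ₗ[ℝ] ℝ where
  toFun f := f e
  map_add' f g := rfl
  map_smul' t f := rfl

theorem polyhedral_of_continuous [FiniteDimensional ℝ X]
    (K : Set X) (hKconv : Convex ℝ K) (hKclosed : IsClosed K)
    (hKcone : ∀ t : ℝ, 0 ≤ t → ∀ x ∈ K, t • x ∈ K)
    (hKpointed : K ∩ (-K) = {0})
    (hcont : ∀ A : Set X, A.Nonempty → IsClosed A → A + K = A → A ⊆ K \ {0} →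
        ContinuousOn (FA K A) K) :
    ∃ (m : ℕ) (φ : Fin m → (X →L[ℝ] ℝ)), K = {x : X | ∀ i, 0 ≤ φ i x} := by
  classical
  have h0K : (0:X) ∈ K := by
    have : (0:X) ∈ K ∩ (-K) := by rw [hKpointed]; rfl
    exact this.1
  have hKadd : ∀ x ∈ K, ∀ y ∈ K, x + y ∈ K := by
    intro x hx y hy
    have h1 : (1/2 : ℝ) • x + (1/2 : ℝ) • y ∈ K :=
      hKconv hx hy (by norm_num) (by norm_num) (by norm_num)
    have h2 := hKcone 2 (by norm_num) _ h1
    have h3 : (2:ℝ) • ((1/2 : ℝ) • x + (1/2 : ℝ) • y) = x + y := by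
      rw [smul_add, smul_smul, smul_smul]; norm_num
    rwa [h3] at h2
  obtain ⟨u, hu⟩ := exists_strict_pos_functional hKclosed hKconv hKcone hKpointed
  have hu_nonneg : ∀ x ∈ K, 0 ≤ u x := by
    intro x hx
    rcases eq_or_ne x 0 with rfl | hx0
    · simp
    · exact le_of_lt (hu x hx hx0)
  set C : Set X := {x ∈ K | u x = 1} with hCdef
  have hCsubK : C ⊆ K := fun x hx => hx.1
  have hCconv : Convex ℝ C :=
    hKconv.inter (convex_hyperplane (IsLinearMap.mk u.map_add u.map_smul) 1)
  have hCclosed : IsClosed C :=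
    hKclosed.inter (isClosed_eq u.continuous continuous_const)
  have hCne0 : ∀ c ∈ C, c ≠ 0 := by
    intro c hc hc0
    rw [hc0] at hc
    have := hc.2
    simp at this
  have hCcomp : IsCompact C := by
    rw [Metric.isCompact_iff_isClosed_bounded]
    refine ⟨hCclosed, ?_⟩
    rcases Set.eq_empty_or_nonempty C with hCe | ⟨c₀, hc₀⟩
    · rw [hCe]; exact Bornology.isBounded_empty
    · set s : Set X := K ∩ Metric.sphere 0 1 with hsdef
      have hscomp : IsCompact s := by
        rw [Metric.isCompact_iff_isClosed_bounded]
        exact ⟨hKclosed.inter Metric.isClosed_sphere,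
          Metric.isBounded_sphere.subset Set.inter_subset_right⟩
      have hsne : s.Nonempty := by
        refine ⟨‖c₀‖⁻¹ • c₀, hKcone _ (inv_nonneg.2 (norm_nonneg c₀)) _ hc₀.1, ?_⟩
        rw [mem_sphere_zero_iff_norm]
        exact norm_smul_inv_norm (𝕜 := ℝ) (hCne0 c₀ hc₀)
      obtain ⟨z, hz, hminOn⟩ := hscomp.exists_isMinOn hsne u.continuous.continuousOn
      have hmin := isMinOn_iff.1 hminOn
      have hz0 : z ≠ 0 := by
        intro h
        have := hz.2
        rw [h, mem_sphere_zero_iff_norm] at this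
        simp at this
      have hm : 0 < u z := hu z hz.1 hz0
      refine (Metric.isBounded_closedBall (x := (0:X)) (r := (u z)⁻¹)).subset ?_
      intro x hx
      rw [Metric.mem_closedBall, dist_zero_right]
      have hx0 : x ≠ 0 := hCne0 x hx
      have hxn : 0 < ‖x‖ := norm_pos_iff.2 hx0
      have hxs : ‖x‖⁻¹ • x ∈ s := by
        refine ⟨hKcone _ (inv_nonneg.2 (norm_nonneg x)) _ hx.1, ?_⟩
        rw [mem_sphere_zero_iff_norm]
        exact norm_smul_inv_norm (𝕜 := ℝ) hx0
      have h1 : u z ≤ u (‖x‖⁻¹ • x) := hmin _ hxs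
      rw [map_smul, smul_eq_mul, hx.2, mul_one] at h1
      exact (le_inv_comm₀ hm hxn).1 h1
  have hdecomp : ∀ x ∈ K, x ≠ 0 → (u x)⁻¹ • x ∈ C ∧ x = (u x) • ((u x)⁻¹ • x) := by
    intro x hx hx0
    have ht : 0 < u x := hu x hx hx0
    constructor
    · refine ⟨hKcone _ (le_of_lt (inv_pos.2 ht)) _ hx, ?_⟩
      rw [map_smul, smul_eq_mul, inv_mul_cancel₀ (ne_of_gt ht)]
    · rw [smul_smul, mul_inv_cancel₀ (ne_of_gt ht), one_smul]
  set E : Set X := C.extremePoints ℝ with hEdef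
  have hEsubC : E ⊆ C := extremePoints_subset
  have hEfin : E.Finite := by
    by_contra hinf
    have hinf' : E.Infinite := hinf
    set f := hinf'.natEmbedding with hfdef
    have hfC : ∀ n : ℕ, (f n : X) ∈ C := fun n => hEsubC (f n).2
    obtain ⟨c, hcC, σ, hσ, hq⟩ := hCcomp.tendsto_subseq hfC
    have hNe : ∃ N : ℕ, ∀ k, N ≤ k → (f (σ k) : X) ≠ c := by
      by_cases hex : ∃ k₀, (f (σ k₀) : X) = c
      · obtain ⟨k₀, hk₀⟩ := hex
        refine ⟨k₀ + 1, fun k hk hkc => ?_⟩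
        have h1 : f (σ k) = f (σ k₀) := Subtype.ext (hkc.trans hk₀.symm)
        have h2 : σ k = σ k₀ := f.injective h1
        have h3 : k = k₀ := hσ.injective h2
        omega
      · push_neg at hex
        exact ⟨0, fun k _ => hex k⟩
    obtain ⟨N, hN⟩ := hNe
    set e : ℕ → X := fun k => (f (σ (k + N)) : X) with hedef
    have heE : ∀ k, e k ∈ E := fun k => (f (σ (k + N))).2
    have heC : ∀ k, e k ∈ C := fun k => hEsubC (heE k)
    have hene : ∀ k, e k ≠ c := fun k => hN _ (Nat.le_add_left N k)
    have helim : Tendsto e atTop (𝓝 c) := by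
      have h1 : Tendsto (fun k : ℕ => σ (k + N)) atTop atTop :=
        hσ.tendsto_atTop.comp (tendsto_add_atTop_nat N)
      have h2 : Tendsto (fun k : ℕ => k + N) atTop atTop := tendsto_add_atTop_nat N
      exact hq.comp h2
    set A : Set X := {c} + K with hAdef
    have hmemA : ∀ y : X, y ∈ A ↔ y - c ∈ K := by
      intro y
      constructor
      · rintro ⟨c', hc', k, hk, rfl⟩
        rw [Set.mem_singleton_iff] at hc'
        subst hc'
        simpa using hk
      · intro h
        exact ⟨c, rfl, y - c, h, by simp⟩
    have hAne : A.Nonempty := ⟨c, (hmemA c).2 (by simpa using h0K)⟩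
    have hAcl : IsClosed A := by
      have h1 : A = (Homeomorph.addLeft c) '' K := by
        rw [hAdef, Set.singleton_add]
        rfl
      rw [h1]
      exact (Homeomorph.addLeft c).isClosedMap K hKclosed
    have hKK : K + K = K := by
      apply Set.Subset.antisymm
      · rintro x ⟨a, ha, b, hb, rfl⟩
        exact hKadd a ha b hb
      · intro x hx
        exact ⟨x, hx, 0, h0K, by simp⟩
    have hAK : A + K = A := by rw [hAdef, add_assoc, hKK]
    have hAsub : A ⊆ K \ {0} := by
      intro y hy
      have h1 : y - c ∈ K := (hmemA y).1 hy
      constructor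
      · have h2 := hKadd c hcC.1 (y - c) h1
        simpa using h2
      · rw [Set.mem_singleton_iff]
        intro h0
        rw [h0, zero_sub] at h1
        have hc2 : c ∈ K ∩ (-K) := ⟨hcC.1, Set.mem_neg.2 h1⟩
        rw [hKpointed] at hc2
        exact hCne0 c hcC hc2
    have hFAc : FA K A c = 1 := by
      have hSet : {t : ℝ | 0 ≤ t ∧ c ∈ scaled K A t} = Set.Icc 0 1 := by
        ext t
        simp only [Set.mem_setOf_eq, Set.mem_Icc]
        constructor
        · rintro ⟨ht0, hts⟩
          refine ⟨ht0, ?_⟩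
          rcases ht0.eq_or_lt with rfl | htpos
          · norm_num
          · rw [mem_scaled_pos htpos] at hts
            have h1 : t⁻¹ • c - c ∈ K := (hmemA _).1 hts
            have h2 : 0 ≤ u (t⁻¹ • c - c) := hu_nonneg _ h1
            rw [map_sub, map_smul, smul_eq_mul, hcC.2, mul_one] at h2
            have h3 : 1 ≤ t⁻¹ := by linarith
            exact ((one_le_inv_iff₀).1 h3).2
        · rintro ⟨ht0, ht1⟩
          rcases ht0.eq_or_lt with rfl | htpos
          · exact ⟨le_rfl, mem_scaled_zero.2 hcC.1⟩
          · refine ⟨ht0, ?_⟩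
            rw [mem_scaled_pos htpos]
            refine (hmemA _).2 ?_
            have h4 : t⁻¹ • c - c = (t⁻¹ - 1) • c := by rw [sub_smul, one_smul]
            rw [h4]
            refine hKcone _ ?_ _ hcC.1
            have h5 : (1:ℝ) ≤ t⁻¹ := (one_le_inv_iff₀).2 ⟨htpos, ht1⟩
            linarith
      rw [FA, hSet, csSup_Icc (by norm_num)]
    have hFAe : ∀ k, FA K A (e k) = 0 := by
      intro k
      have hSet : {t : ℝ | 0 ≤ t ∧ e k ∈ scaled K A t} = {0} := by
        apply Set.Subset.antisymm
        · rintro t ⟨ht0, hts⟩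
          rw [Set.mem_singleton_iff]
          by_contra ht0'
          have htpos : 0 < t := lt_of_le_of_ne ht0 (Ne.symm ht0')
          rw [mem_scaled_pos htpos] at hts
          have h1 : t⁻¹ • e k - c ∈ K := (hmemA _).1 hts
          set k' : X := t • (t⁻¹ • e k - c) with hk'def
          have hk'K : k' ∈ K := hKcone _ (le_of_lt htpos) _ h1
          have hek : e k = t • c + k' := by
            rw [hk'def, smul_sub, smul_smul, mul_inv_cancel₀ (ne_of_gt htpos), one_smul]
            abel
          have huek : u (e k) = 1 := (heC k).2
          have huk' : u k' = 1 - t := by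
            have h2 : u (e k) = t * u c + u k' := by rw [hek, map_add, map_smul, smul_eq_mul]
            rw [huek, hcC.2, mul_one] at h2
            linarith
          have ht1 : t ≤ 1 := by
            have h3 := hu_nonneg k' hk'K
            linarith [huk']
          rcases ht1.lt_or_eq with hlt | heq
          · set c' : X := (1 - t)⁻¹ • k' with hc'def
            have h1t : 0 < 1 - t := by linarith
            have hc'C : c' ∈ C := by
              refine ⟨hKcone _ (le_of_lt (inv_pos.2 h1t)) _ hk'K, ?_⟩
              rw [hc'def, map_smul, smul_eq_mul, huk', inv_mul_cancel₀ (ne_of_gt h1t)]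
            have hseg : e k ∈ openSegment ℝ c c' := by
              refine ⟨t, 1 - t, htpos, h1t, by ring, ?_⟩
              rw [hc'def, smul_smul, mul_inv_cancel₀ (ne_of_gt h1t), one_smul]
              exact hek.symm
            have hext := (mem_extremePoints.1 (heE k)).2 c hcC c' hc'C hseg
            exact hene k hext.1.symm
          · have hk'0 : k' = 0 := by
              by_contra hk'ne
              have h6 := hu k' hk'K hk'ne
              rw [huk', heq] at h6
              norm_num at h6
            have h7 : e k = c := by rw [hek, hk'0, heq, one_smul, add_zero]
            exact hene k h7
        · intro t ht
          rw [Set.mem_singleton_iff] at ht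
          subst ht
          exact ⟨le_rfl, mem_scaled_zero.2 (hCsubK (heC k))⟩
      rw [FA, hSet, csSup_singleton]
    have hKcont := hcont A hAne hAcl hAK hAsub
    have hcw : ContinuousWithinAt (FA K A) K c := hKcont c hcC.1
    have h1 : Tendsto e atTop (𝓝[K] c) := by
      rw [tendsto_nhdsWithin_iff]
      exact ⟨helim, Eventually.of_forall (fun k => hCsubK (heC k))⟩
    have h2 : Tendsto (fun k => FA K A (e k)) atTop (𝓝 (FA K A c)) :=
      (hcw.tendsto).comp h1
    have h3 : Tendsto (fun k => FA K A (e k)) atTop (𝓝 0) := by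
      simp only [hFAe]
      exact tendsto_const_nhds
    have h4 := tendsto_nhds_unique h2 h3
    rw [hFAc] at h4
    norm_num at h4
  have hCKM : C = convexHull ℝ E := by
    have h1 := closure_convexHull_extremePoints hCcomp hCconv
    rw [← hEdef] at h1
    rw [← h1, (hEfin.isClosed_convexHull ℝ).closure_eq]
  set Efin : Finset X := hEfin.toFinset with hEfindef
  have hEfinmem : ∀ x, x ∈ Efin ↔ x ∈ E := fun x => hEfin.mem_toFinset
  have hKfc : K = fincone Efin := by
    apply Set.Subset.antisymm
    · intro x hx
      rcases eq_or_ne x 0 with rfl | hx0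
      · exact fincone_zero_mem _
      · obtain ⟨hcC', hxeq⟩ := hdecomp x hx hx0
        have ht : 0 < u x := hu x hx hx0
        have hmem : (u x)⁻¹ • x ∈ convexHull ℝ E := by rw [← hCKM]; exact hcC'
        rw [convexHull_eq] at hmem
        obtain ⟨ι, t, w, z, hw0, hw1, hzE, hcm⟩ := hmem
        rw [Finset.centerMass_eq_of_sum_1 _ _ hw1] at hcm
        rw [hxeq, ← hcm, Finset.smul_sum]
        refine Finset.sum_induction _ (· ∈ fincone Efin)
          (fun a b ha hb => fincone_add_mem ha hb) (fincone_zero_mem _) ?_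
        intro i hi
        rw [smul_smul]
        exact fincone_smul_mem (mul_nonneg (le_of_lt ht) (hw0 i hi))
          (mem_fincone_of_mem ((hEfinmem _).2 (hzE i hi)))
    · refine fincone_subset h0K (fun a ha b hb => hKadd a ha b hb) hKcone ?_
      intro g hg
      exact hCsubK (hEsubC ((hEfinmem g).1 hg))
  set S : Finset ((X →L[ℝ] ℝ) →ₗ[ℝ] ℝ) := Efin.image evalAt with hSdef
  obtain ⟨T, hT⟩ := halfspaces_fincone (X →L[ℝ] ℝ) S
  have hD : {h : X →L[ℝ] ℝ | ∀ e' ∈ Efin, 0 ≤ h e'} = fincone T := by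
    rw [← hT]
    ext h
    simp only [Set.mem_setOf_eq]
    constructor
    · intro hh ℓ hℓ
      obtain ⟨e', he', rfl⟩ := Finset.mem_image.1 hℓ
      exact hh e' he'
    · intro hh e' he'
      exact hh (evalAt e') (Finset.mem_image_of_mem _ he')
  refine ⟨T.card, fun i => (T.equivFin.symm i : X →L[ℝ] ℝ), ?_⟩
  apply Set.Subset.antisymm
  · intro x hx
    intro i
    set fT : X →L[ℝ] ℝ := (T.equivFin.symm i : X →L[ℝ] ℝ) with hfTdef
    have hfT : fT ∈ T := (T.equivFin.symm i).2
    have hfTD : ∀ e' ∈ Efin, 0 ≤ fT e' := by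
      have hmem : fT ∈ {h : X →L[ℝ] ℝ | ∀ e' ∈ Efin, 0 ≤ h e'} := by
        rw [hD]; exact mem_fincone_of_mem hfT
      exact hmem
    have hx' : x ∈ fincone Efin := by rw [← hKfc]; exact hx
    have hmem2 : x ∈ {y : X | 0 ≤ fT y} := by
      refine fincone_subset ?_ ?_ ?_ ?_ hx'
      · simp
      · intro a ha b hb; simp only [Set.mem_setOf_eq, map_add]; exact add_nonneg ha hb
      · intro t' ht' a ha
        simp only [Set.mem_setOf_eq, map_smul, smul_eq_mul]
        exact mul_nonneg ht' ha
      · intro g hg; exact hfTD g hg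
    exact hmem2
  · intro x hx
    simp only [Set.mem_setOf_eq] at hx
    have hxT : ∀ f ∈ T, 0 ≤ f x := by
      intro f hf
      have h1 := hx (T.equivFin ⟨f, hf⟩)
      rwa [Equiv.symm_apply_apply] at h1
    by_contra hxK
    obtain ⟨f, v, hfv, hv⟩ := geometric_hahn_banach_closed_point hKconv hKclosed hxK
    have hv0 : 0 < v := by
      have h1 := hfv 0 h0K
      simpa using h1
    have hfK : ∀ a ∈ K, f a ≤ 0 := by
      intro a ha
      by_contra hfa
      push_neg at hfa
      have ht : 0 < (v + 1) / f a := by positivity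
      have h1 := hfv _ (hKcone _ (le_of_lt ht) a ha)
      rw [map_smul, smul_eq_mul, div_mul_cancel₀ _ (ne_of_gt hfa)] at h1
      linarith
    have hnf : (-f) ∈ fincone T := by
      rw [← hD]
      intro e' he'
      simp only [ContinuousLinearMap.neg_apply]
      have h1 : e' ∈ K := hCsubK (hEsubC ((hEfinmem e').1 he'))
      linarith [hfK e' h1]
    have hmem3 : (-f) ∈ {h : X →L[ℝ] ℝ | 0 ≤ h x} := by
      refine fincone_subset ?_ ?_ ?_ ?_ hnf
      · simp
      · intro a ha b hb
        simp only [Set.mem_setOf_eq, ContinuousLinearMap.add_apply]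
        exact add_nonneg ha hb
      · intro t' ht' a ha
        simp only [Set.mem_setOf_eq, ContinuousLinearMap.smul_apply, smul_eq_mul]
        exact mul_nonneg ht' ha
      · exact hxT
    simp only [Set.mem_setOf_eq, ContinuousLinearMap.neg_apply] at hmem3
    linarith

end Converse

/-- Let `K` be a pointed closed convex cone with nonempty interior in a
finite-dimensional real normed space. Then `F_A` is continuous on `K` for every `A`
satisfying condition (H) with this `K`, if and only if `K` is polyhedral (a finite
intersection of closed half-spaces `{x : ⟨x, x_i*⟩ ≥ 0}`). -/
theorem stmt18 [FiniteDimensional ℝ X] [Nontrivial X]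
    (hdim : 2 ≤ Module.finrank ℝ X)
    (K : Set X)
    (hKconv : Convex ℝ K) (hKclosed : IsClosed K)
    (hKcone : ∀ t : ℝ, 0 ≤ t → ∀ x ∈ K, t • x ∈ K)
    (hKpointed : K ∩ (-K) = {0}) (hKint : (interior K).Nonempty) :
    (∀ A : Set X, A.Nonempty → IsClosed A → A + K = A → A ⊆ K \ {0} →
        ContinuousOn (FA K A) K) ↔
      ∃ (m : ℕ) (φ : Fin m → (X →L[ℝ] ℝ)), K = {x : X | ∀ i, 0 ≤ φ i x} := by
  constructor
  · intro h
    exact polyhedral_of_continuous K hKconv hKclosed hKcone hKpointed h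
  · rintro ⟨m, φ, hK⟩ A hAne hAcl hAK hAsub
    exact continuousOn_FA_of_polyhedral hKcone hKpointed hK hAne hAcl hAK hAsub
end

section
/- Let F : ℝ₊^p → ℝ₊ (p ≥ 2) be continuous with F(0) = 0 and F(x) ≥ F(x') whenever x − x' ∈ ℝ₊^p, and set L(γ) := {x ∈ ℝ₊^p : F(x) ≥ γ} and Γ_F := {γ > 0 : L(γ) ≠ ∅}. (a) If F is strictly quasiconcave on {x ∈ ℝ₊^p : F(x) > 0} (i.e. F(λx + (1−λ)x') > min{F(x), F(x')} for distinct x, x' in that set and λ ∈ (0,1)), then for every γ ∈ Γ_F the support function σ_{L(γ)} is (Fréchet) differentiable at every point of −ℝ₊₊^p. (b) If F satisfies F(x) > F(x') whenever x − x' ∈ ℝ₊^p \ {0} and F(x') > 0, and σ_{L(γ)} is differentiable at every point of −ℝ₊₊^p for every γ ∈ Γ_F, then F is quasiconcave. -/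
open Set Filter Topology RealInnerProductSpace

/-- The support function of a set `A ⊆ ℝ^p` (Euclidean space identified with its dual via
the inner product), with values in `ℝ ∪ {+∞}`. -/
noncomputable def supE {p : ℕ} (A : Set (EuclideanSpace ℝ (Fin p)))
    (y : EuclideanSpace ℝ (Fin p)) : EReal :=
  ⨆ a ∈ A, ((⟪a, y⟫ : ℝ) : EReal)

/-- The support function of `A` is (Fréchet) differentiable at `y`: some real-valued
function agreeing with it near `y` is differentiable at `y`. -/
def SigmaDiffAtE {p : ℕ} (A : Set (EuclideanSpace ℝ (Fin p)))
    (y : EuclideanSpace ℝ (Fin p)) : Prop :=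
  ∃ g : EuclideanSpace ℝ (Fin p) → ℝ,
    (∀ᶠ z in 𝓝 y, ((g z : ℝ) : EReal) = supE A z) ∧ DifferentiableAt ℝ g y

/-- The upper level set `L(γ) = {x ∈ ℝ₊^p : F x ≥ γ}`. -/
def levelSet {p : ℕ} (F : EuclideanSpace ℝ (Fin p) → ℝ) (γ : ℝ) :
    Set (EuclideanSpace ℝ (Fin p)) :=
  {x | (∀ i, 0 ≤ x i) ∧ γ ≤ F x}

namespace Stmt19
variable {p : ℕ}

lemma inner_eq (x y : EuclideanSpace ℝ (Fin p)) : ⟪x, y⟫ = ∑ i, x i * y i := by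
  simp [PiLp.inner_apply]; exact Finset.sum_congr rfl fun _ _ => mul_comm _ _

lemma abs_coord_le_norm (x : EuclideanSpace ℝ (Fin p)) (i : Fin p) : |x i| ≤ ‖x‖ := by
  rw [EuclideanSpace.norm_eq, ← Real.sqrt_sq_eq_abs]
  apply Real.sqrt_le_sqrt
  have : x i ^ 2 = ‖x i‖ ^ 2 := by simp [Real.norm_eq_abs, sq_abs]
  rw [this]
  exact Finset.single_le_sum (f := fun j => ‖x j‖ ^ 2) (fun j _ => by positivity)
    (Finset.mem_univ i)

lemma norm_le_of_coords {x : EuclideanSpace ℝ (Fin p)} {R : ℝ} (hR : 0 ≤ R)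
    (h : ∀ i, |x i| ≤ R) : ‖x‖ ≤ Real.sqrt p * R := by
  rw [EuclideanSpace.norm_eq]
  have h1 : ∑ i, ‖x i‖ ^ 2 ≤ ∑ _i : Fin p, R ^ 2 := by
    apply Finset.sum_le_sum
    intro i _
    have := h i
    rw [Real.norm_eq_abs]
    nlinarith [abs_nonneg (x i)]
  calc Real.sqrt (∑ i, ‖x i‖ ^ 2) ≤ Real.sqrt (∑ _i : Fin p, R ^ 2) := Real.sqrt_le_sqrt h1
    _ = Real.sqrt (p * R ^ 2) := by rw [Finset.sum_const]; simp [mul_comm]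
    _ = Real.sqrt p * R := by
        rw [Real.sqrt_mul (by positivity), Real.sqrt_sq hR]

lemma isClosed_orthant : IsClosed {x : EuclideanSpace ℝ (Fin p) | ∀ i, 0 ≤ x i} := by
  have : {x : EuclideanSpace ℝ (Fin p) | ∀ i, 0 ≤ x i}
      = ⋂ i, (EuclideanSpace.proj (𝕜 := ℝ) i) ⁻¹' Ici 0 := by
    ext x; simp [mem_iInter]
  rw [this]
  exact isClosed_iInter fun i => IsClosed.preimage (EuclideanSpace.proj i).continuous isClosed_Ici

lemma isClosed_levelSet (F : EuclideanSpace ℝ (Fin p) → ℝ) (γ : ℝ)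
    (hFcont : ContinuousOn F {x | ∀ i, 0 ≤ x i}) : IsClosed (levelSet F γ) := by
  have h := hFcont.preimage_isClosed_of_isClosed isClosed_orthant (isClosed_Ici (a := γ))
  have he : levelSet F γ = {x : EuclideanSpace ℝ (Fin p) | ∀ i, 0 ≤ x i} ∩ F ⁻¹' Ici γ := by
    ext x; simp [levelSet, Set.mem_setOf_eq, and_comm]
  rwa [he]

lemma supE_eq_max {A : Set (EuclideanSpace ℝ (Fin p))} {a y : EuclideanSpace ℝ (Fin p)}
    (ha : a ∈ A) (hmax : ∀ b ∈ A, ⟪b, y⟫ ≤ ⟪a, y⟫) :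
    supE A y = ((⟪a, y⟫ : ℝ) : EReal) := by
  apply le_antisymm
  · exact iSup₂_le fun b hb => EReal.coe_le_coe_iff.2 (hmax b hb)
  · exact le_iSup₂ (f := fun b (_ : b ∈ A) => ((⟪b, y⟫ : ℝ) : EReal)) a ha

/-- Box truncation setup: a compact `K ⊆ L(γ)` such that for every `z` near `y`,
points of `L(γ)` outside `K` are strictly dominated by `x₀`. -/
lemma box_setup (hp : 0 < p) {F : EuclideanSpace ℝ (Fin p) → ℝ} {γ : ℝ}
    (hFcont : ContinuousOn F {x | ∀ i, 0 ≤ x i})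
    {x₀ : EuclideanSpace ℝ (Fin p)} (hx₀ : x₀ ∈ levelSet F γ)
    {y : EuclideanSpace ℝ (Fin p)} (hy : ∀ i, y i < 0) :
    ∃ (ρ : ℝ) (K : Set (EuclideanSpace ℝ (Fin p))), 0 < ρ ∧ IsCompact K ∧
      K ⊆ levelSet F γ ∧ x₀ ∈ K ∧
      ∀ z ∈ Metric.ball y ρ, ∀ b ∈ levelSet F γ, b ∉ K → ⟪b, z⟫ < ⟪x₀, z⟫ := by
  haveI : Nonempty (Fin p) := Fin.pos_iff_nonempty.mp hp
  have hne : (Finset.univ : Finset (Fin p)).Nonempty := Finset.univ_nonempty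
  set δ : ℝ := Finset.univ.inf' hne (fun i => -y i) with hδdef
  have hδpos : 0 < δ := by
    rw [hδdef, Finset.lt_inf'_iff]
    intro i _; linarith [hy i]
  have hδle : ∀ i, δ ≤ -y i := fun i => Finset.inf'_le _ (Finset.mem_univ i)
  set ρ : ℝ := δ / 2 with hρdef
  have hρpos : 0 < ρ := by positivity
  set R : ℝ := (‖x₀‖ * (‖y‖ + ρ) + 1) * (2 / δ) with hRdef
  have hRpos : 0 < R := by
    apply mul_pos
    · nlinarith [norm_nonneg x₀, norm_nonneg y]
    · positivity
  set R' : ℝ := max R ‖x₀‖ with hR'def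
  have hR'0 : 0 ≤ R' := le_trans (norm_nonneg x₀) (le_max_right _ _)
  set K : Set (EuclideanSpace ℝ (Fin p)) := levelSet F γ ∩ {a | ∀ i, a i ≤ R'} with hKdef
  have hx₀K : x₀ ∈ K := by
    refine ⟨hx₀, fun i => ?_⟩
    exact le_trans (le_trans (le_abs_self _) (abs_coord_le_norm x₀ i)) (le_max_right _ _)
  have hKclosed : IsClosed K := by
    apply IsClosed.inter (isClosed_levelSet F γ hFcont)
    have : {a : EuclideanSpace ℝ (Fin p) | ∀ i, a i ≤ R'}
        = ⋂ i, (EuclideanSpace.proj (𝕜 := ℝ) i) ⁻¹' Iic R' := by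
      ext x; simp [mem_iInter]
    rw [this]
    exact isClosed_iInter fun i => IsClosed.preimage (EuclideanSpace.proj i).continuous isClosed_Iic
  have hKbdd : Bornology.IsBounded K := by
    rw [isBounded_iff_forall_norm_le]
    refine ⟨Real.sqrt p * R', fun a ha => ?_⟩
    apply norm_le_of_coords hR'0
    intro i
    rw [abs_le]
    exact ⟨by linarith [ha.1.1 i, hR'0], ha.2 i⟩
  refine ⟨ρ, K, hρpos, Metric.isCompact_of_isClosed_isBounded hKclosed hKbdd,
    Set.inter_subset_left, hx₀K, ?_⟩
  intro z hz b hb hbK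
  have hzy : ‖z - y‖ < ρ := by
    rw [← dist_eq_norm]; exact Metric.mem_ball.1 hz
  have hzc : ∀ i, z i < -(δ/2) := by
    intro i
    have h1 : z i - y i ≤ |z i - y i| := le_abs_self _
    have h2 : |z i - y i| ≤ ‖z - y‖ := by
      have := abs_coord_le_norm (z - y) i
      simpa using this
    have := hδle i
    have : z i < y i + ρ := by linarith
    rw [hρdef] at *
    linarith [hδle i]
  have hznorm : ‖z‖ ≤ ‖y‖ + ρ := by
    calc ‖z‖ = ‖y + (z - y)‖ := by rw [show y + (z - y) = z from by abel]
      _ ≤ ‖y‖ + ‖z - y‖ := norm_add_le _ _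
      _ ≤ ‖y‖ + ρ := by linarith
  have hbbox : ¬ ∀ i, b i ≤ R' := fun h => hbK ⟨hb, h⟩
  push_neg at hbbox
  obtain ⟨j, hj⟩ := hbbox
  have hbj : R ≤ b j := le_trans (le_max_left _ _) (le_of_lt hj)
  have h1 : ⟪b, z⟫ ≤ b j * z j := by
    rw [inner_eq]
    calc ∑ i, b i * z i ≤ ∑ i, (if i = j then b j * z j else 0) := by
          apply Finset.sum_le_sum
          intro i _
          by_cases hij : i = j
          · subst hij; simp
          · simp only [hij, if_false]
            exact mul_nonpos_of_nonneg_of_nonpos (hb.1 i) (by linarith [hzc i, hδpos])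
      _ = b j * z j := by rw [Finset.sum_ite_eq']; simp
  have h2 : b j * z j ≤ R * z j :=
    mul_le_mul_of_nonpos_right hbj (by linarith [hzc j, hδpos])
  have h3 : R * z j ≤ R * (-(δ/2)) :=
    mul_le_mul_of_nonneg_left (le_of_lt (hzc j)) (le_of_lt hRpos)
  have h4 : R * (-(δ/2)) < -(‖x₀‖ * (‖y‖ + ρ)) := by
    have hδne : δ ≠ 0 := ne_of_gt hδpos
    have h2δ : (2 / δ) * (-(δ/2)) = -1 := by field_simp
    have : R * (-(δ/2)) = (‖x₀‖ * (‖y‖ + ρ) + 1) * ((2 / δ) * (-(δ/2))) := by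
      rw [hRdef]; ring
    rw [this, h2δ]
    nlinarith [norm_nonneg x₀, norm_nonneg y]
  have h5 : -(‖x₀‖ * (‖y‖ + ρ)) ≤ ⟪x₀, z⟫ := by
    have hn := abs_real_inner_le_norm x₀ z
    rw [abs_le] at hn
    have : ‖x₀‖ * ‖z‖ ≤ ‖x₀‖ * (‖y‖ + ρ) :=
      mul_le_mul_of_nonneg_left hznorm (norm_nonneg x₀)
    linarith [hn.1]
  linarith

lemma exists_max_level (hp : 0 < p) {F : EuclideanSpace ℝ (Fin p) → ℝ} {γ : ℝ}
    (hFcont : ContinuousOn F {x | ∀ i, 0 ≤ x i})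
    {x₀ : EuclideanSpace ℝ (Fin p)} (hx₀ : x₀ ∈ levelSet F γ)
    {y : EuclideanSpace ℝ (Fin p)} (hy : ∀ i, y i < 0) :
    ∃ a ∈ levelSet F γ, ∀ b ∈ levelSet F γ, ⟪b, y⟫ ≤ ⟪a, y⟫ := by
  obtain ⟨ρ, K, hρ, hKcomp, hKsub, hx₀K, hout⟩ := box_setup hp hFcont hx₀ hy
  have hcont : Continuous (fun b : EuclideanSpace ℝ (Fin p) => (⟪b, y⟫ : ℝ)) :=
    Continuous.inner continuous_id continuous_const
  obtain ⟨a, haK, hamax⟩ := hKcomp.exists_isMaxOn ⟨x₀, hx₀K⟩ hcont.continuousOn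
  refine ⟨a, hKsub haK, fun b hb => ?_⟩
  by_cases hbK : b ∈ K
  · simpa using hamax hbK
  · exact le_trans (le_of_lt (hout y (Metric.mem_ball_self hρ) b hb hbK))
      (by simpa using hamax hx₀K)

lemma fderiv_eq_of_max {A : Set (EuclideanSpace ℝ (Fin p))} {y : EuclideanSpace ℝ (Fin p)}
    {G : EuclideanSpace ℝ (Fin p) → ℝ}
    (hGe : ∀ᶠ z in 𝓝 y, ((G z : ℝ) : EReal) = supE A z)
    (hGd : DifferentiableAt ℝ G y)
    {a : EuclideanSpace ℝ (Fin p)} (ha : a ∈ A) (hmax : ∀ b ∈ A, ⟪b, y⟫ ≤ ⟪a, y⟫) :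
    fderiv ℝ G y = innerSL ℝ a := by
  have hGy : G y = ⟪a, y⟫ := by
    have h1 := hGe.self_of_nhds
    rw [supE_eq_max ha hmax] at h1
    exact_mod_cast h1
  have hmin : IsLocalMin (fun z => G z - ⟪a, z⟫) y := by
    have hev : ∀ᶠ z in 𝓝 y, ⟪a, z⟫ ≤ G z := by
      filter_upwards [hGe] with z hz
      have hle : ((⟪a, z⟫ : ℝ) : EReal) ≤ supE A z :=
        le_iSup₂ (f := fun b (_ : b ∈ A) => ((⟪b, z⟫ : ℝ) : EReal)) a ha
      rw [← hz] at hle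
      exact_mod_cast hle
    filter_upwards [hev] with z hz
    simp only [hGy]
    linarith
  have h0 := hmin.fderiv_eq_zero
  have heq : (fun z => G z - ⟪a, z⟫) = fun z => G z - (innerSL ℝ a) z := by
    funext z; rw [innerSL_apply_apply]
  rw [heq, fderiv_fun_sub hGd (innerSL ℝ a).differentiableAt, ContinuousLinearMap.fderiv] at h0
  exact sub_eq_zero.1 h0


set_option maxHeartbeats 1000000 in
lemma partA (hp : 0 < p) {F : EuclideanSpace ℝ (Fin p) → ℝ}
    (hFcont : ContinuousOn F {x | ∀ i, 0 ≤ x i}) (hF0 : F 0 = 0)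
    (hsqc : ∀ x x' : EuclideanSpace ℝ (Fin p),
        (∀ i, 0 ≤ x i) → 0 < F x → (∀ i, 0 ≤ x' i) → 0 < F x' → x ≠ x' →
        ∀ t : ℝ, t ∈ Ioo (0 : ℝ) 1 → min (F x) (F x') < F (t • x + (1 - t) • x'))
    {γ : ℝ} (hγ : 0 < γ) (hne : (levelSet F γ).Nonempty)
    {y : EuclideanSpace ℝ (Fin p)} (hy : ∀ i, y i < 0) :
    SigmaDiffAtE (levelSet F γ) y := by
  obtain ⟨x₀, hx₀⟩ := hne
  obtain ⟨ρ, K, hρ, hKcomp, hKsub, hx₀K, hout⟩ := box_setup hp hFcont hx₀ hy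
  -- maximizers over K
  have hmaxK : ∀ z : EuclideanSpace ℝ (Fin p), ∃ a, a ∈ K ∧ ∀ b ∈ K, ⟪b, z⟫ ≤ ⟪a, z⟫ := by
    intro z
    have hcont : Continuous (fun b : EuclideanSpace ℝ (Fin p) => (⟪b, z⟫ : ℝ)) :=
      Continuous.inner continuous_id continuous_const
    obtain ⟨a, haK, hamax⟩ := hKcomp.exists_isMaxOn ⟨x₀, hx₀K⟩ hcont.continuousOn
    exact ⟨a, haK, fun b hb => by simpa using hamax hb⟩
  choose az hazK hazmax using hmaxK
  set g : EuclideanSpace ℝ (Fin p) → ℝ := fun z => ⟪az z, z⟫ with hgdef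
  have hyball : y ∈ Metric.ball y ρ := Metric.mem_ball_self hρ
  -- domination over the whole level set near y
  have hdom : ∀ z ∈ Metric.ball y ρ, ∀ b ∈ levelSet F γ, ⟪b, z⟫ ≤ g z := by
    intro z hz b hb
    by_cases hbK : b ∈ K
    · exact hazmax z b hbK
    · exact le_trans (le_of_lt (hout z hz b hb hbK)) (hazmax z x₀ hx₀K)
  have hev : ∀ᶠ z in 𝓝 y, ((g z : ℝ) : EReal) = supE (levelSet F γ) z := by
    filter_upwards [Metric.ball_mem_nhds y hρ] with z hz
    exact (supE_eq_max (hKsub (hazK z)) (hdom z hz)).symm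
  -- strictness at y
  have hstrict : ∀ b ∈ K, b ≠ az y → ⟪b, y⟫ < g y := by
    intro b hbK hbne
    rcases lt_or_eq_of_le (hazmax y b hbK) with h | h
    · exact h
    · exfalso
      set w : EuclideanSpace ℝ (Fin p) :=
        (1/2 : ℝ) • b + (1 - (1/2 : ℝ)) • az y with hwdef
      have hbA := hKsub hbK
      have haA := hKsub (hazK y)
      have hFb : 0 < F b := lt_of_lt_of_le hγ hbA.2
      have hFa : 0 < F (az y) := lt_of_lt_of_le hγ haA.2
      have hFw : γ < F w := by
        have h12 : (1/2 : ℝ) ∈ Ioo (0:ℝ) 1 := by constructor <;> norm_num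
        have := hsqc b (az y) hbA.1 hFb haA.1 hFa hbne (1/2) h12
        have hm : γ ≤ min (F b) (F (az y)) := le_min hbA.2 haA.2
        rw [hwdef]
        linarith
      have hw0 : ∀ i, 0 ≤ w i := by
        intro i
        have hwi : w i = (1/2) * b i + (1 - 1/2) * az y i := by
          simp [hwdef]
        rw [hwi]
        have h1 := hbA.1 i; have h2 := haA.1 i
        nlinarith
      have hwi : ∃ i, 0 < w i := by
        by_contra hcon
        push_neg at hcon
        have hwz : w = 0 := by
          ext i
          exact le_antisymm (hcon i) (hw0 i)
        rw [hwz, hF0] at hFw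
        linarith
      obtain ⟨i, hi⟩ := hwi
      set P : ℝ → EuclideanSpace ℝ (Fin p) :=
        fun s => w - s • EuclideanSpace.single i (1:ℝ) with hPdef
      have hPcoord : ∀ s k, P s k = w k - s * (if k = i then 1 else 0) := by
        intro s k
        rw [hPdef]
        simp [EuclideanSpace.single_apply]
      have htP : Tendsto P (𝓝[>] (0:ℝ)) (𝓝[{x : EuclideanSpace ℝ (Fin p) | ∀ i, 0 ≤ x i}] w) := by
        rw [tendsto_nhdsWithin_iff]
        constructor
        · have hc : Continuous P := continuous_const.sub (continuous_id.smul continuous_const)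
          have h0 : P 0 = w := by rw [hPdef]; simp
          have := hc.tendsto 0
          rw [h0] at this
          exact this.mono_left nhdsWithin_le_nhds
        · filter_upwards [Ioc_mem_nhdsGT_of_mem (⟨le_refl (0:ℝ), hi⟩ : (0:ℝ) ∈ Ico (0:ℝ) (w i))]
            with s hs
          intro k
          rw [hPcoord]
          by_cases hk : k = i
          · subst hk; simp; linarith [hs.2]
          · simp [hk]; exact hw0 k
      have hFP : Tendsto (fun s => F (P s)) (𝓝[>] (0:ℝ)) (𝓝 (F w)) :=
        (hFcont w hw0).tendsto.comp htP
      have hev2 : ∀ᶠ s in 𝓝[>] (0:ℝ), γ < F (P s) := hFP.eventually_const_lt hFw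
      have hev3 : Ioc (0:ℝ) (w i) ∈ 𝓝[>] (0:ℝ) :=
        Ioc_mem_nhdsGT_of_mem ⟨le_refl (0:ℝ), hi⟩
      obtain ⟨s, hsγ, hsIoc⟩ := (hev2.and (eventually_of_mem hev3 (fun s hs => hs))).exists
      have hPA : P s ∈ levelSet F γ := by
        constructor
        · intro k
          rw [hPcoord]
          by_cases hk : k = i
          · subst hk; simp; linarith [hsIoc.2]
          · simp [hk]; exact hw0 k
        · exact le_of_lt hsγ
      have hval : ⟪P s, y⟫ = ⟪w, y⟫ - s * y i := by
        rw [hPdef]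
        rw [inner_sub_left, real_inner_smul_left, EuclideanSpace.inner_single_left]
        simp
      have hwy : ⟪w, y⟫ = g y := by
        have hgy : g y = ⟪az y, y⟫ := rfl
        rw [hwdef, inner_add_left, real_inner_smul_left, real_inner_smul_left, h, hgy]
        ring
      have hle := hdom y hyball (P s) hPA
      rw [hval, hwy] at hle
      have : 0 < - (s * y i) := by
        have := hy i
        have := hsIoc.1
        nlinarith
      linarith
  -- bound on K
  obtain ⟨B₀, hB₀⟩ := isBounded_iff_forall_norm_le.1 hKcomp.isBounded
  set B : ℝ := max B₀ 1 with hBdef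
  have hBpos : 0 < B := lt_of_lt_of_le one_pos (le_max_right _ _)
  have hB : ∀ a ∈ K, ‖a‖ ≤ B := fun a ha => le_trans (hB₀ a ha) (le_max_left _ _)
  -- localization of maximizers
  have hloc : ∀ ε : ℝ, 0 < ε → ∃ η : ℝ, 0 < η ∧
      ∀ z, dist z y < η → dist (az z) (az y) ≤ ε := by
    intro ε hε
    set K' : Set (EuclideanSpace ℝ (Fin p)) := K ∩ {b | ε ≤ dist b (az y)} with hK'def
    by_cases hK'ne : K'.Nonempty
    · have hK'cl : IsClosed {b : EuclideanSpace ℝ (Fin p) | ε ≤ dist b (az y)} :=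
        isClosed_le continuous_const (continuous_id.dist continuous_const)
      have hK'comp : IsCompact K' := hKcomp.inter_right hK'cl
      have hcont : Continuous (fun b : EuclideanSpace ℝ (Fin p) => (⟪b, y⟫ : ℝ)) :=
        Continuous.inner continuous_id continuous_const
      obtain ⟨aH, haH, haHmax⟩ := hK'comp.exists_isMaxOn hK'ne hcont.continuousOn
      set c : ℝ := ⟪aH, y⟫ with hcdef
      have haHne : aH ≠ az y := by
        intro hcon
        have := haH.2
        rw [hcon] at this
        simp at this
        linarith
      have hc : c < g y := hstrict aH haH.1 haHne
      refine ⟨min 1 ((g y - c) / (2 * B)), lt_min one_pos (div_pos (by linarith) (by linarith)), ?_⟩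
      intro z hz
      by_contra hfar
      push_neg at hfar
      have hazK' : az z ∈ K' := ⟨hazK z, le_of_lt hfar⟩
      have hup : ⟪az z, y⟫ ≤ c := by simpa using haHmax hazK'
      -- lower bound on ⟪az z, y⟫
      have hzy : ‖z - y‖ < (g y - c) / (2 * B) :=
        lt_of_lt_of_le (by rw [← dist_eq_norm]; exact hz) (min_le_right _ _)
      have h1 : ⟪az z, y⟫ = ⟪az z, z⟫ + ⟪az z, y - z⟫ := by
        rw [← inner_add_right]
        congr 1
        abel
      have h2 : -(B * ‖z - y‖) ≤ ⟪az z, y - z⟫ := by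
        have hn := abs_real_inner_le_norm (az z) (y - z)
        rw [abs_le] at hn
        have hnz : ‖y - z‖ = ‖z - y‖ := norm_sub_rev _ _
        have : ‖az z‖ * ‖y - z‖ ≤ B * ‖z - y‖ := by
          rw [hnz]
          exact mul_le_mul_of_nonneg_right (hB _ (hazK z)) (norm_nonneg _)
        linarith [hn.1]
      have h3 : ⟪az y, z⟫ = ⟪az y, y⟫ + ⟪az y, z - y⟫ := by
        rw [← inner_add_right]
        congr 1
        abel
      have h4 : -(B * ‖z - y‖) ≤ ⟪az y, z - y⟫ := by
        have hn := abs_real_inner_le_norm (az y) (z - y)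
        rw [abs_le] at hn
        have : ‖az y‖ * ‖z - y‖ ≤ B * ‖z - y‖ :=
          mul_le_mul_of_nonneg_right (hB _ (hazK y)) (norm_nonneg _)
        linarith [hn.1]
      have h5 : ⟪az y, z⟫ ≤ ⟪az z, z⟫ := hazmax z (az y) (hazK y)
      have hgyy : ⟪az y, y⟫ = g y := rfl
      have : g y - 2 * (B * ‖z - y‖) ≤ c := by
        rw [h1] at hup
        rw [h3, hgyy] at h5
        linarith
      have hfin : B * ‖z - y‖ < B * ((g y - c) / (2 * B)) :=
        mul_lt_mul_of_pos_left hzy hBpos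
      have : B * ((g y - c) / (2 * B)) = (g y - c) / 2 := by
        field_simp
      nlinarith [hfin]
    · refine ⟨1, one_pos, fun z _ => ?_⟩
      by_contra hfar
      push_neg at hfar
      exact hK'ne ⟨az z, hazK z, le_of_lt hfar⟩
  -- differentiability
  have hder : HasFDerivAt g (innerSL ℝ (az y)) y := by
    rw [hasFDerivAt_iff_isLittleO_nhds_zero, Asymptotics.isLittleO_iff]
    intro ε hε
    obtain ⟨η, hη, hηloc⟩ := hloc ε hε
    filter_upwards [Metric.ball_mem_nhds (0 : EuclideanSpace ℝ (Fin p)) (lt_min hη hρ)]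
      with h hh
    rw [mem_ball_zero_iff] at hh
    set z := y + h with hzdef
    have hzy : dist z y = ‖h‖ := by
      rw [dist_eq_norm, hzdef]
      congr 1
      abel
    have hzball : z ∈ Metric.ball y ρ := by
      rw [Metric.mem_ball, hzy]
      exact lt_of_lt_of_le hh (min_le_right _ _)
    have hd : dist (az z) (az y) ≤ ε :=
      hηloc z (by rw [hzy]; exact lt_of_lt_of_le hh (min_le_left _ _))
    have happ : (innerSL ℝ (az y)) h = ⟪az y, h⟫ := innerSL_apply_apply (𝕜 := ℝ) _ _
    -- upper bound
    have hub : g z - g y - ⟪az y, h⟫ ≤ ε * ‖h‖ := by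
      have h1 : ⟪az z, y⟫ ≤ g y := hdom y hyball (az z) (hKsub (hazK z))
      have h2 : g z - g y ≤ ⟪az z, z⟫ - ⟪az z, y⟫ := by
        have : g z = ⟪az z, z⟫ := rfl
        linarith [h1, le_refl (g z)]
      have h3 : ⟪az z, z⟫ - ⟪az z, y⟫ = ⟪az z, h⟫ := by
        rw [← inner_sub_right]
        congr 1
        rw [hzdef]
        abel
      have h4 : ⟪az z, h⟫ - ⟪az y, h⟫ = ⟪az z - az y, h⟫ := (inner_sub_left _ _ _).symm
      have h5 : ⟪az z - az y, h⟫ ≤ ‖az z - az y‖ * ‖h‖ := real_inner_le_norm _ _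
      have h6 : ‖az z - az y‖ * ‖h‖ ≤ ε * ‖h‖ := by
        apply mul_le_mul_of_nonneg_right _ (norm_nonneg h)
        rw [← dist_eq_norm]
        exact hd
      linarith
    -- lower bound
    have hlb : 0 ≤ g z - g y - ⟪az y, h⟫ := by
      have h1 : ⟪az y, z⟫ ≤ g z := hazmax z (az y) (hazK y)
      have h2 : ⟪az y, z⟫ = ⟪az y, y⟫ + ⟪az y, h⟫ := by
        rw [← inner_add_right, hzdef]
      have h3 : ⟪az y, y⟫ = g y := rfl
      linarith
    rw [happ]
    rw [Real.norm_eq_abs, abs_of_nonneg hlb]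
    exact hub
  exact ⟨g, hev, hder.differentiableAt⟩


set_option maxHeartbeats 4000000 in
lemma partB (hp : 2 ≤ p) {F : EuclideanSpace ℝ (Fin p) → ℝ}
    (hFnonneg : ∀ x : EuclideanSpace ℝ (Fin p), (∀ i, 0 ≤ x i) → 0 ≤ F x)
    (hFcont : ContinuousOn F {x | ∀ i, 0 ≤ x i})
    (hsm : ∀ x x' : EuclideanSpace ℝ (Fin p),
        (∀ i, 0 ≤ x' i) → (∀ i, x' i ≤ x i) → x ≠ x' → 0 < F x' → F x' < F x)
    (hdiff : ∀ γ : ℝ, 0 < γ → (levelSet F γ).Nonempty →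
        ∀ y : EuclideanSpace ℝ (Fin p), (∀ i, y i < 0) → SigmaDiffAtE (levelSet F γ) y)
    (x x' : EuclideanSpace ℝ (Fin p)) (hx : ∀ i, 0 ≤ x i) (hx' : ∀ i, 0 ≤ x' i)
    (t : ℝ) (ht : t ∈ Icc (0:ℝ) 1) :
    min (F x) (F x') ≤ F (t • x + (1 - t) • x') := by
  by_contra hcon
  push_neg at hcon
  set m : EuclideanSpace ℝ (Fin p) := t • x + (1 - t) • x' with hmdef
  clear_value m
  have hppos : 0 < p := by omega
  have ht0 := ht.1
  have ht1 := ht.2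
  have hm : ∀ i, 0 ≤ m i := by
    intro i
    have hmi : m i = t * x i + (1 - t) * x' i := by simp [hmdef]
    rw [hmi]
    have h1 : 0 ≤ t * x i := mul_nonneg ht0 (hx i)
    have h2 : 0 ≤ (1 - t) * x' i := mul_nonneg (by linarith) (hx' i)
    linarith
  have hFm : 0 ≤ F m := hFnonneg m hm
  have hminpos : 0 < min (F x) (F x') := lt_of_le_of_lt hFm hcon
  set γ : ℝ := (F m + min (F x) (F x')) / 2 with hγdef
  clear_value γ
  have hγpos : 0 < γ := by rw [hγdef]; linarith
  have hγm : F m < γ := by rw [hγdef]; linarith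
  have hγmin : γ < min (F x) (F x') := by rw [hγdef]; linarith
  have hxA : x ∈ levelSet F γ := ⟨hx, le_of_lt (lt_of_lt_of_le hγmin (min_le_left _ _))⟩
  have hx'A : x' ∈ levelSet F γ := ⟨hx', le_of_lt (lt_of_lt_of_le hγmin (min_le_right _ _))⟩
  have hAne : (levelSet F γ).Nonempty := ⟨x, hxA⟩
  set one : EuclideanSpace ℝ (Fin p) := WithLp.toLp 2 (fun _ => (1:ℝ)) with honedef
  have honecoord : ∀ i, one i = 1 := fun _ => rfl
  clear_value one
  -- choose ε with F (m + ε • 𝟙) < γ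
  obtain ⟨ε, hεpos, hεlt⟩ : ∃ ε : ℝ, 0 < ε ∧ F (m + ε • one) < γ := by
    set P : ℝ → EuclideanSpace ℝ (Fin p) := fun s => m + s • one with hPdef
    have hPcoord : ∀ s i, P s i = m i + s := by
      intro s i
      have h2 : P s i = m i + s * one i := by simp [hPdef]
      rw [h2, honecoord i, mul_one]
    have htP : Tendsto P (𝓝[>] (0:ℝ))
        (𝓝[{z : EuclideanSpace ℝ (Fin p) | ∀ i, 0 ≤ z i}] m) := by
      rw [tendsto_nhdsWithin_iff]
      constructor
      · have hc : Continuous P := continuous_const.add (continuous_id.smul continuous_const)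
        have h0 : P 0 = m := by rw [hPdef]; simp
        have := hc.tendsto 0
        rw [h0] at this
        exact this.mono_left nhdsWithin_le_nhds
      · filter_upwards [self_mem_nhdsWithin] with s hs
        intro i
        rw [hPcoord]
        have hspos : (0:ℝ) < s := hs
        linarith [hm i]
    have hFP : Tendsto (fun s => F (P s)) (𝓝[>] (0:ℝ)) (𝓝 (F m)) :=
      (hFcont m hm).tendsto.comp htP
    have hev2 : ∀ᶠ s in 𝓝[>] (0:ℝ), F (P s) < γ := hFP.eventually_lt_const hγm
    obtain ⟨s, h1, h2⟩ :=
      (hev2.and (eventually_of_mem self_mem_nhdsWithin (fun u hu => hu))).exists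
    exact ⟨s, h2, h1⟩
  set mt : EuclideanSpace ℝ (Fin p) := m + ε • one with hmtdef
  clear_value mt
  have hmtcoord : ∀ i, mt i = m i + ε := by
    intro i
    have h2 : mt i = m i + ε * one i := by simp [hmtdef]
    rw [h2, honecoord i, mul_one]
  have hmtpos : ∀ i, 0 < mt i := by
    intro i; rw [hmtcoord]; linarith [hm i]
  -- the demand map
  have hchoice : ∀ q : EuclideanSpace ℝ (Fin p), ∃ a, a ∈ levelSet F γ ∧
      ((∀ i, 0 < q i) → ∀ b ∈ levelSet F γ, ⟪b, -q⟫ ≤ ⟪a, -q⟫) := by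
    intro q
    by_cases hq : ∀ i, 0 < q i
    · have hqneg : ∀ i, (-q : EuclideanSpace ℝ (Fin p)) i < 0 := by
        intro i
        have : (-q : EuclideanSpace ℝ (Fin p)) i = -(q i) := by simp
        rw [this]; linarith [hq i]
      obtain ⟨a, ha, hmax⟩ := exists_max_level hppos hFcont hxA hqneg
      exact ⟨a, ha, fun _ => hmax⟩
    · exact ⟨x, hxA, fun h => absurd h hq⟩
  choose gA hgA hgmax using hchoice
  set Ecost : EuclideanSpace ℝ (Fin p) → ℝ := fun q => ⟪gA q, q⟫ with hEdef
  have hEq0 : ∀ q, Ecost q = ⟪gA q, q⟫ := fun _ => rfl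
  clear_value Ecost
  have hEmin : ∀ q, (∀ i, 0 < q i) → ∀ b ∈ levelSet F γ, Ecost q ≤ ⟪b, q⟫ := by
    intro q hq b hb
    have h := hgmax q hq b hb
    rw [inner_neg_right, inner_neg_right] at h
    have h2 := hEq0 q
    linarith
  -- constants
  set β : ℝ := ε / p with hβdef
  clear_value β
  have hβpos : 0 < β := by rw [hβdef]; exact div_pos hεpos (by exact_mod_cast hppos)
  set V : ℝ := (∑ i, mt i) + β * p * Real.log p with hVdef
  clear_value V
  set c : ℝ := min (1 / (2 * p)) (Real.exp (-(V + 1) / β)) with hcdef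
  have hcpos : 0 < c := by rw [hcdef]; exact lt_min (by positivity) (Real.exp_pos _)
  have hcexp : c ≤ Real.exp (-(V + 1) / β) := by rw [hcdef]; exact min_le_right _ _
  have hc2p : c ≤ 1 / (2 * p) := by rw [hcdef]; exact min_le_left _ _
  clear_value c
  -- the compact domain
  set Δ : Set (EuclideanSpace ℝ (Fin p)) := {q | (∀ i, c ≤ q i) ∧ ∑ i, q i = 1} with hΔdef
  have hΔpos : ∀ q ∈ Δ, ∀ i, 0 < q i := fun q hq i => lt_of_lt_of_le hcpos (hq.1 i)
  have hΔub : ∀ q ∈ Δ, ∀ i, q i ≤ 1 := by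
    intro q hq i
    have h0 : ∀ j, 0 ≤ q j := fun j => le_of_lt (hΔpos q hq j)
    have h := Finset.single_le_sum (f := fun j => q j) (fun j _ => h0 j) (Finset.mem_univ i)
    rw [hq.2] at h
    exact h
  set qh : EuclideanSpace ℝ (Fin p) := (p : ℝ)⁻¹ • one with hqhdef
  have hpinv : (0:ℝ) < (p:ℝ)⁻¹ := by positivity
  have hqhcoord : ∀ i, qh i = (p:ℝ)⁻¹ := by
    intro i
    have h2 : qh i = (p:ℝ)⁻¹ * one i := by simp [hqhdef]
    rw [h2, honecoord i, mul_one]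
  have hsum_qh : ∑ i, qh i = 1 := by
    simp only [hqhcoord]
    rw [Finset.sum_const, Finset.card_univ, Fintype.card_fin, nsmul_eq_mul]
    field_simp
  have hqhΔ : qh ∈ Δ := by
    constructor
    · intro i
      rw [hqhcoord]
      calc c ≤ 1 / (2 * p) := hc2p
        _ ≤ (p:ℝ)⁻¹ := by
            rw [one_div]
            apply inv_anti₀ (by positivity)
            have : (1:ℝ) ≤ (p:ℝ) := by exact_mod_cast hppos
            linarith
    · exact hsum_qh
  have hΔclosed : IsClosed Δ := by
    have heq : Δ = (⋂ i, (EuclideanSpace.proj (𝕜 := ℝ) i) ⁻¹' Ici c) ∩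
        {q : EuclideanSpace ℝ (Fin p) | ∑ i, q i = 1} := by
      ext q; simp [hΔdef, mem_iInter]
    rw [heq]
    apply IsClosed.inter
    · exact isClosed_iInter fun i =>
        IsClosed.preimage (EuclideanSpace.proj i).continuous isClosed_Ici
    · exact isClosed_eq (continuous_finset_sum _ fun i _ => (EuclideanSpace.proj i).continuous)
        continuous_const
  have hΔcomp : IsCompact Δ := by
    apply Metric.isCompact_of_isClosed_isBounded hΔclosed
    rw [isBounded_iff_forall_norm_le]
    refine ⟨Real.sqrt p * 1, fun q hq => ?_⟩
    apply norm_le_of_coords one_pos.le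
    intro i
    rw [abs_le]
    exact ⟨by linarith [hΔpos q hq i], hΔub q hq i⟩
  -- bound on the demand over Δ
  obtain ⟨DB, hDB0, hgAbound⟩ : ∃ DB : ℝ, 0 ≤ DB ∧ ∀ q ∈ Δ, ‖gA q‖ ≤ DB := by
    refine ⟨Real.sqrt p * (Real.sqrt p * ‖x‖ / c), by positivity, ?_⟩
    intro q hq
    apply norm_le_of_coords (by positivity)
    intro i
    have hgc : ∀ j, 0 ≤ gA q j := (hgA q).1
    rw [abs_of_nonneg (hgc i)]
    have hqpos := hΔpos q hq
    have h1 : gA q i * q i ≤ Ecost q := by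
      have hEq : Ecost q = ∑ j, gA q j * q j := by rw [hEq0 q]; exact inner_eq _ _
      rw [hEq]
      exact Finset.single_le_sum (f := fun j => gA q j * q j)
        (fun j _ => mul_nonneg (hgc j) (le_of_lt (hqpos j))) (Finset.mem_univ i)
    have h2 : Ecost q ≤ ⟪x, q⟫ := hEmin q hqpos x hxA
    have h3 : ⟪x, q⟫ ≤ ‖x‖ * ‖q‖ := real_inner_le_norm _ _
    have h4 : ‖q‖ ≤ Real.sqrt p * 1 := by
      apply norm_le_of_coords one_pos.le
      intro j
      rw [abs_le]
      exact ⟨by linarith [hqpos j], hΔub q hq j⟩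
    have h5 : gA q i * c ≤ gA q i * q i :=
      mul_le_mul_of_nonneg_left (hq.1 i) (hgc i)
    rw [le_div_iff₀ hcpos]
    have hx0 : 0 ≤ ‖x‖ := norm_nonneg x
    nlinarith [Real.sqrt_nonneg p]
  -- continuity of the cost function on Δ
  have hElip : ∀ a ∈ Δ, ∀ b ∈ Δ, Ecost a - Ecost b ≤ DB * dist a b := by
    intro a ha b hb
    have h1 : Ecost a ≤ ⟪gA b, a⟫ := hEmin a (hΔpos a ha) (gA b) (hgA b)
    have h2 : Ecost b = ⟪gA b, b⟫ := hEq0 b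
    have h3 : ⟪gA b, a⟫ - ⟪gA b, b⟫ = ⟪gA b, a - b⟫ := (inner_sub_right _ _ _).symm
    have h4 : ⟪gA b, a - b⟫ ≤ ‖gA b‖ * ‖a - b‖ := real_inner_le_norm _ _
    have h5 : ‖gA b‖ * ‖a - b‖ ≤ DB * ‖a - b‖ :=
      mul_le_mul_of_nonneg_right (hgAbound b hb) (norm_nonneg _)
    rw [dist_eq_norm]
    linarith
  have hEcont : ContinuousOn Ecost Δ := by
    rw [Metric.continuousOn_iff]
    intro q hq εc hεc
    refine ⟨εc / (DB + 1), by positivity, ?_⟩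
    intro q' hq' hd
    rw [Real.dist_eq, abs_lt]
    have h1 := hElip q' hq' q hq
    have h2 := hElip q hq q' hq'
    rw [dist_comm] at h2
    have hd' : DB * dist q' q < DB * (εc / (DB + 1)) + εc * (1 / (DB+1)) := by
      have hDB1 : DB * dist q' q ≤ DB * (εc / (DB + 1)) :=
        mul_le_mul_of_nonneg_left (le_of_lt hd) hDB0
      have : 0 < εc * (1 / (DB + 1)) := by positivity
      linarith
    have heq : DB * (εc / (DB + 1)) + εc * (1 / (DB+1)) = εc := by
      field_simp
    rw [heq] at hd'
    constructor <;> linarith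
  -- the barrier functional
  set φ : EuclideanSpace ℝ (Fin p) → ℝ :=
    fun q => ⟪mt, q⟫ - Ecost q - β * ∑ i, Real.log (q i) with hφdef
  have hφeq : ∀ q, φ q = ⟪mt, q⟫ - Ecost q - β * ∑ i, Real.log (q i) := fun _ => rfl
  have hφcont : ContinuousOn φ Δ := by
    apply ContinuousOn.sub
    · apply ContinuousOn.sub
      · exact (Continuous.inner continuous_const continuous_id).continuousOn
      · exact hEcont
    · apply ContinuousOn.mul continuousOn_const
      apply continuousOn_finset_sum
      intro i _
      intro q hq
      apply ContinuousAt.continuousWithinAt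
      have hproj : ContinuousAt (fun z : EuclideanSpace ℝ (Fin p) => z i) q :=
        (EuclideanSpace.proj (𝕜 := ℝ) i).continuous.continuousAt
      show ContinuousAt (Real.log ∘ (fun z : EuclideanSpace ℝ (Fin p) => z i)) q
      exact ContinuousAt.comp (Real.continuousAt_log (ne_of_gt (hΔpos q hq i))) hproj
  clear_value φ
  obtain ⟨qs, hqsΔ, hqsmin⟩ := hΔcomp.exists_isMinOn ⟨qh, hqhΔ⟩ hφcont
  have hqsmin' : ∀ q ∈ Δ, φ qs ≤ φ q := fun q hq => hqsmin hq
  have hqspos : ∀ i, 0 < qs i := hΔpos qs hqsΔ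
  -- ψ ≥ ε on Δ
  have hψ : ∀ q ∈ Δ, Ecost q + ε ≤ ⟪mt, q⟫ := by
    intro q hq
    have hqpos := hΔpos q hq
    have h1 : Ecost q ≤ ⟪x, q⟫ := hEmin q hqpos x hxA
    have h2 : Ecost q ≤ ⟪x', q⟫ := hEmin q hqpos x' hx'A
    have hmq : ⟪m, q⟫ = t * ⟪x, q⟫ + (1 - t) * ⟪x', q⟫ := by
      rw [hmdef, inner_add_left, real_inner_smul_left, real_inner_smul_left]
    have honeq : ⟪one, q⟫ = 1 := by
      rw [inner_eq]
      have h9 : ∀ i, one i * q i = q i := fun i => by rw [honecoord i, one_mul]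
      rw [Finset.sum_congr rfl fun i _ => h9 i]
      exact hq.2
    have hmtq : ⟪mt, q⟫ = ⟪m, q⟫ + ε * ⟪one, q⟫ := by
      rw [hmtdef, inner_add_left, real_inner_smul_left]
    rw [hmtq, honeq, hmq]
    have hs1 : t * Ecost q ≤ t * ⟪x, q⟫ := mul_le_mul_of_nonneg_left h1 ht0
    have hs2 : (1 - t) * Ecost q ≤ (1 - t) * ⟪x', q⟫ :=
      mul_le_mul_of_nonneg_left h2 (by linarith : (0:ℝ) ≤ 1 - t)
    have hsplit : Ecost q = t * Ecost q + (1 - t) * Ecost q := by ring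
    linarith
  -- upper bound for φ at qh
  have hEqh0 : 0 ≤ Ecost qh := by
    have hEq : Ecost qh = ∑ j, gA qh j * qh j := by rw [hEq0 qh]; exact inner_eq _ _
    rw [hEq]
    apply Finset.sum_nonneg
    intro j _
    exact mul_nonneg ((hgA qh).1 j) (le_of_lt (lt_of_lt_of_le hcpos (hqhΔ.1 j)))
  have hmtsum0 : 0 ≤ ∑ i, mt i :=
    Finset.sum_nonneg fun i _ => le_of_lt (hmtpos i)
  have hφqh : φ qh ≤ V := by
    have hlogqh : ∑ j, Real.log (qh j) = -(p * Real.log p) := by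
      simp only [hqhcoord, Real.log_inv]
      rw [Finset.sum_const, Finset.card_univ, Fintype.card_fin, nsmul_eq_mul]
      ring
    have hinnerqh : ⟪mt, qh⟫ = (∑ i, mt i) * (p:ℝ)⁻¹ := by
      rw [inner_eq]
      simp only [hqhcoord]
      rw [← Finset.sum_mul]
    have h1 : ⟪mt, qh⟫ ≤ ∑ i, mt i := by
      rw [hinnerqh]
      have hple : (p:ℝ)⁻¹ ≤ 1 := by
        rw [inv_le_one_iff₀]
        right
        exact_mod_cast hppos
      exact mul_le_of_le_one_right hmtsum0 hple
    have hlogp : 0 ≤ Real.log p := by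
      apply Real.log_nonneg
      exact_mod_cast hppos
    rw [hφeq qh, hlogqh, hVdef]
    have hb : β * -((p:ℝ) * Real.log p) = -(β * (p:ℝ) * Real.log p) := by ring
    linarith [h1, hEqh0, hb]
  -- the minimizer is interior
  have hint : ∀ i, c < qs i := by
    intro i
    rcases lt_or_eq_of_le (hqsΔ.1 i) with h | h
    · exact h
    · exfalso
      have h1 : Ecost qs + ε ≤ ⟪mt, qs⟫ := hψ qs hqsΔ
      have h2 : ∑ j, Real.log (qs j) ≤ Real.log (qs i) := by
        calc ∑ j, Real.log (qs j)
            ≤ ∑ j, (if j = i then Real.log (qs i) else 0) := by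
              apply Finset.sum_le_sum
              intro j _
              by_cases hj : j = i
              · subst hj; simp
              · simp only [hj, if_false]
                exact Real.log_nonpos (le_of_lt (hqspos j)) (hΔub qs hqsΔ j)
          _ = Real.log (qs i) := by rw [Finset.sum_ite_eq']; simp
      have h3 : Real.log c ≤ -(V+1)/β := by
        calc Real.log c ≤ Real.log (Real.exp (-(V + 1) / β)) :=
              Real.log_le_log hcpos hcexp
          _ = -(V+1)/β := Real.log_exp _
      have h4 : -(β * Real.log c) ≥ V + 1 := by
        have hh := mul_le_mul_of_nonneg_left h3 (le_of_lt hβpos)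
        have hβne : β ≠ 0 := ne_of_gt hβpos
        have heq5 : β * (-(V+1)/β) = -(V+1) := by field_simp
        linarith
      have h5 : φ qs ≥ -(β * Real.log c) := by
        rw [hφeq qs]
        have h6 : β * ∑ j, Real.log (qs j) ≤ β * Real.log (qs i) :=
          mul_le_mul_of_nonneg_left h2 (le_of_lt hβpos)
        rw [← h] at h6
        linarith
      have h7 := hqsmin' qh hqhΔ
      linarith
  -- derivative analysis at the interior minimizer
  have hqsneg : ∀ i, (-qs : EuclideanSpace ℝ (Fin p)) i < 0 := by
    intro i
    have : (-qs : EuclideanSpace ℝ (Fin p)) i = -(qs i) := by simp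
    rw [this]; linarith [hqspos i]
  obtain ⟨G, hGe, hGd⟩ := hdiff γ hγpos hAne (-qs) hqsneg
  set gd : EuclideanSpace ℝ (Fin p) := gA qs with hgddef
  have hgdmax : ∀ b ∈ levelSet F γ, ⟪b, -qs⟫ ≤ ⟪gd, -qs⟫ := hgmax qs hqspos
  have hfG : fderiv ℝ G (-qs) = innerSL ℝ gd := fderiv_eq_of_max hGe hGd (hgA qs) hgdmax
  have hGfd : HasFDerivAt G (innerSL ℝ gd) (-qs) := hfG ▸ hGd.hasFDerivAt
  -- local representation of the cost function
  have hErep : ∀ᶠ q in 𝓝 qs, Ecost q = - G (-q) := by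
    have hti : Tendsto (fun q : EuclideanSpace ℝ (Fin p) => -q) (𝓝 qs) (𝓝 (-qs)) :=
      continuous_neg.tendsto qs
    have hnege : ∀ᶠ q in 𝓝 qs, ((G (-q) : ℝ) : EReal) = supE (levelSet F γ) (-q) :=
      hti.eventually hGe
    have hopen : IsOpen {q : EuclideanSpace ℝ (Fin p) | ∀ i, 0 < q i} := by
      have heq2 : {q : EuclideanSpace ℝ (Fin p) | ∀ i, 0 < q i}
          = ⋂ i, (EuclideanSpace.proj (𝕜 := ℝ) i) ⁻¹' Ioi 0 := by
        ext q; simp [mem_iInter]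
      rw [heq2]
      exact isOpen_iInter_of_finite fun i =>
        IsOpen.preimage (EuclideanSpace.proj i).continuous isOpen_Ioi
    have hpose : ∀ᶠ q in 𝓝 qs, ∀ i, 0 < q i :=
      eventually_of_mem (hopen.mem_nhds hqspos) (fun q hq => hq)
    filter_upwards [hnege, hpose] with q h1 h2
    have h3 : supE (levelSet F γ) (-q) = ((⟪gA q, -q⟫ : ℝ) : EReal) :=
      supE_eq_max (hgA q) (hgmax q h2)
    rw [h3] at h1
    have h4 : G (-q) = ⟪gA q, -q⟫ := by exact_mod_cast h1
    rw [hEq0 q, h4, inner_neg_right]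
    ring
  -- key first-order identity
  have hkey : ∀ i j : Fin p, mt i - gd i - β * (qs i)⁻¹ = mt j - gd j - β * (qs j)⁻¹ := by
    intro i j
    by_cases hij : i = j
    · subst hij; rfl
    set d : EuclideanSpace ℝ (Fin p) :=
      EuclideanSpace.single i (1:ℝ) - EuclideanSpace.single j 1 with hddef
    have hdcoord : ∀ k, d k = (if k = i then (1:ℝ) else 0) - (if k = j then 1 else 0) := by
      intro k
      have : d k = EuclideanSpace.single i (1:ℝ) k - EuclideanSpace.single j (1:ℝ) k := by
        rw [hddef]; simp
      rw [this, EuclideanSpace.single_apply, EuclideanSpace.single_apply]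
    have hdabs : ∀ k, |d k| ≤ 1 := by
      intro k
      rw [hdcoord]
      split_ifs <;> norm_num
    have hdsum : ∑ k, d k = 0 := by
      simp only [hdcoord]
      rw [Finset.sum_sub_distrib, Finset.sum_ite_eq', Finset.sum_ite_eq']
      simp
    have hcoordsd : ∀ s : ℝ, ∀ k, (qs + s • d) k = qs k + s * d k := by
      intro s k; simp
    have hsum_path : ∀ s : ℝ, ∑ k, (qs + s • d) k = 1 := by
      intro s
      simp only [hcoordsd]
      rw [Finset.sum_add_distrib, ← Finset.mul_sum, hdsum, hqsΔ.2]
      ring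
    set r : ℝ := min (qs i - c) (qs j - c) with hrdef
    have hrpos : 0 < r := lt_min (by linarith [hint i]) (by linarith [hint j])
    have hmem : ∀ s : ℝ, |s| < r → qs + s • d ∈ Δ := by
      intro s hs
      refine ⟨?_, hsum_path s⟩
      intro k
      rw [hcoordsd]
      by_cases hk0 : d k = 0
      · rw [hk0]
        simpa using hqsΔ.1 k
      · have hk : k = i ∨ k = j := by
          by_contra hkc
          push_neg at hkc
          rw [hdcoord] at hk0
          simp [hkc.1, hkc.2] at hk0
        have habs : |s * d k| ≤ |s| := by
          rw [abs_mul]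
          nlinarith [hdabs k, abs_nonneg s]
        have h1 : -(|s|) ≤ s * d k := by
          have := neg_abs_le (s * d k)
          linarith
        rcases hk with hk | hk
        · subst hk
          have := min_le_left (qs k - c) (qs j - c)
          rw [hrdef] at hs
          linarith
        · subst hk
          have := min_le_right (qs i - c) (qs k - c)
          rw [hrdef] at hs
          linarith
    set u : ℝ → ℝ := fun s => φ (qs + s • d) with hudef
    have hulocmin : IsLocalMin u 0 := by
      have : ∀ᶠ s in 𝓝 (0:ℝ), u 0 ≤ u s := by
        filter_upwards [Metric.ball_mem_nhds (0:ℝ) hrpos] with s hs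
        have hsr : |s| < r := by simpa [Real.dist_eq] using hs
        have h1 : φ qs ≤ φ (qs + s • d) := hqsmin' _ (hmem s hsr)
        have h2 : u 0 = φ qs := by rw [hudef]; simp
        rw [h2, hudef]
        exact h1
      exact this
    -- derivative of u at 0
    have hpath : HasDerivAt (fun s : ℝ => qs + s • d) d 0 := by
      have h := ((hasDerivAt_id (0:ℝ)).smul_const d).const_add qs
      simpa using h
    have hGcomp : HasDerivAt (fun s : ℝ => G (-(qs + s • d))) ⟪gd, -d⟫ 0 := by
      have hpathneg : HasDerivAt (fun s : ℝ => -(qs + s • d)) (-d) 0 := hpath.neg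
      have h0 : -(qs + (0:ℝ) • d) = -qs := by simp
      have hl : HasFDerivAt G (innerSL ℝ gd) ((fun s : ℝ => -(qs + s • d)) 0) := by
        simpa [h0] using hGfd
      have := hl.comp_hasDerivAt 0 hpathneg
      simpa [Function.comp_def, innerSL_apply_apply] using this
    have hinner : HasDerivAt (fun s : ℝ => ⟪mt, qs + s • d⟫) ⟪mt, d⟫ 0 := by
      have heq3 : (fun s : ℝ => (⟪mt, qs + s • d⟫ : ℝ)) = fun s => ⟪mt, qs⟫ + s * ⟪mt, d⟫ := by
        funext s
        rw [inner_add_right, real_inner_smul_right]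
      rw [heq3]
      simpa using (hasDerivAt_mul_const (⟪mt, d⟫ : ℝ)).const_add (⟪mt, qs⟫ : ℝ)
    have hlog : HasDerivAt (fun s : ℝ => ∑ k, Real.log ((qs + s • d) k))
        (∑ k, (qs k)⁻¹ * d k) 0 := by
      have heq4 : (fun s : ℝ => ∑ k, Real.log ((qs + s • d) k))
          = fun s => ∑ k, Real.log (qs k + s * d k) := by
        funext s
        exact Finset.sum_congr rfl fun k _ => by rw [hcoordsd]
      rw [heq4]
      apply HasDerivAt.fun_sum
      intro k _
      have haff : HasDerivAt (fun s : ℝ => qs k + s * d k) (d k) 0 := by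
        simpa using (hasDerivAt_mul_const (d k)).const_add (qs k)
      have hlogk : HasDerivAt Real.log (qs k + 0 * d k)⁻¹ (qs k + 0 * d k) := by
        apply Real.hasDerivAt_log
        simpa using ne_of_gt (hqspos k)
      have := hlogk.comp 0 haff
      simpa [Function.comp_def] using this
    have hurep : u =ᶠ[𝓝 (0:ℝ)]
        fun s => ⟪mt, qs + s • d⟫ + G (-(qs + s • d)) - β * ∑ k, Real.log ((qs + s • d) k) := by
      have hcont2 : Continuous (fun s : ℝ => qs + s • d) :=
        continuous_const.add (continuous_id.smul continuous_const)
      have ht0' : Tendsto (fun s : ℝ => qs + s • d) (𝓝 0) (𝓝 qs) := by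
        have := hcont2.tendsto 0
        simpa using this
      filter_upwards [ht0'.eventually hErep] with s hs
      have hus : u s = φ (qs + s • d) := rfl
      rw [hus, hφeq (qs + s • d), hs]
      ring
    have hud : HasDerivAt u (⟪mt, d⟫ + ⟪gd, -d⟫ - β * ∑ k, (qs k)⁻¹ * d k) 0 :=
      ((hinner.add hGcomp).sub (hlog.const_mul β)).congr_of_eventuallyEq hurep
    have h0 := hulocmin.deriv_eq_zero
    rw [hud.deriv] at h0
    have e1 : (⟪mt, d⟫ : ℝ) = mt i - mt j := by
      rw [hddef, inner_sub_right, EuclideanSpace.inner_single_right,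
        EuclideanSpace.inner_single_right]
      simp
    have e2 : (⟪gd, -d⟫ : ℝ) = -(gd i - gd j) := by
      rw [inner_neg_right, hddef, inner_sub_right, EuclideanSpace.inner_single_right,
        EuclideanSpace.inner_single_right]
      simp
    have e3 : ∑ k, (qs k)⁻¹ * d k = (qs i)⁻¹ - (qs j)⁻¹ := by
      simp only [hdcoord, mul_sub, mul_ite, mul_one, mul_zero]
      rw [Finset.sum_sub_distrib, Finset.sum_ite_eq', Finset.sum_ite_eq']
      simp
    rw [e1, e2, e3] at h0
    linarith
  -- conclude: the demand is dominated by mt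
  set i0 : Fin p := ⟨0, hppos⟩ with hi0def
  set κ : ℝ := mt i0 - gd i0 - β * (qs i0)⁻¹ with hκdef
  have hwk : ∀ k, mt k - gd k - β * (qs k)⁻¹ = κ := fun k => hkey k i0
  have hsumw : ∑ k, (mt k - gd k - β * (qs k)⁻¹) * qs k = κ := by
    calc ∑ k, (mt k - gd k - β * (qs k)⁻¹) * qs k = ∑ k, κ * qs k :=
          Finset.sum_congr rfl fun k _ => by rw [hwk k]
      _ = κ * ∑ k, qs k := by rw [Finset.mul_sum]
      _ = κ := by rw [hqsΔ.2]; ring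
  have hexp : ∑ k, (mt k - gd k - β * (qs k)⁻¹) * qs k
      = ⟪mt, qs⟫ - Ecost qs - β * p := by
    have h1 : ∀ k, (mt k - gd k - β * (qs k)⁻¹) * qs k
        = mt k * qs k - gd k * qs k - β * ((qs k)⁻¹ * qs k) := by
      intro k; ring
    have h2 : ∀ k, (qs k)⁻¹ * qs k = 1 := fun k => inv_mul_cancel₀ (ne_of_gt (hqspos k))
    calc ∑ k, (mt k - gd k - β * (qs k)⁻¹) * qs k
        = ∑ k, (mt k * qs k - gd k * qs k - β * ((qs k)⁻¹ * qs k)) :=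
          Finset.sum_congr rfl fun k _ => h1 k
      _ = ∑ k, (mt k * qs k - gd k * qs k - β * 1) :=
          Finset.sum_congr rfl fun k _ => by rw [h2 k]
      _ = ∑ k, mt k * qs k - ∑ k, gd k * qs k - ∑ _k : Fin p, β * 1 := by
          rw [Finset.sum_sub_distrib, Finset.sum_sub_distrib]
      _ = ⟪mt, qs⟫ - Ecost qs - β * p := by
          rw [inner_eq]
          have hE : Ecost qs = ∑ k, gd k * qs k := by
            rw [hEq0 qs, hgddef]; exact inner_eq _ _
          rw [← hE]
          rw [Finset.sum_const, Finset.card_univ, Fintype.card_fin, nsmul_eq_mul]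
          ring
  have hψs : Ecost qs + ε ≤ ⟪mt, qs⟫ := hψ qs hqsΔ
  have hβp : β * p = ε := by
    rw [hβdef]
    field_simp
  have hκ0 : 0 ≤ κ := by
    have := hsumw
    rw [hexp] at this
    linarith
  have hlt : ∀ k, gd k < mt k := by
    intro k
    have h1 := hwk k
    have h2 : 0 < β * (qs k)⁻¹ := mul_pos hβpos (inv_pos.2 (hqspos k))
    linarith
  have hgdA := hgA qs
  have hne2 : mt ≠ gd := by
    intro hcon2
    have h := hlt i0
    rw [hcon2] at h
    exact lt_irrefl _ h
  have hFgd : 0 < F gd := lt_of_lt_of_le hγpos hgdA.2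
  have hFlt := hsm mt gd hgdA.1 (fun k => le_of_lt (hlt k)) hne2 hFgd
  have hγgd : γ ≤ F gd := hgdA.2
  have hFmt : F mt < γ := hεlt
  linarith

end Stmt19


/-- Let `F : ℝ₊^p → ℝ₊` (`p ≥ 2`) be continuous with `F 0 = 0` and
nondecreasing w.r.t. the componentwise order, and set `L(γ) = {x ∈ ℝ₊^p : F x ≥ γ}`,
`Γ_F = {γ > 0 : L(γ) ≠ ∅}`.
(a) If `F` is strictly quasiconcave on `{x ∈ ℝ₊^p : F x > 0}`, then for every `γ ∈ Γ_F`
the support function `σ_{L(γ)}` is differentiable at every point of `-ℝ₊₊^p`.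
(b) If `F(x) > F(x')` whenever `x ≥ x'`, `x ≠ x'` and `F x' > 0`, and `σ_{L(γ)}` is
differentiable on `-ℝ₊₊^p` for every `γ ∈ Γ_F`, then `F` is quasiconcave. -/
theorem stmt19 (p : ℕ) (hp : 2 ≤ p)
    (F : EuclideanSpace ℝ (Fin p) → ℝ)
    (hFnonneg : ∀ x : EuclideanSpace ℝ (Fin p), (∀ i, 0 ≤ x i) → 0 ≤ F x)
    (hFcont : ContinuousOn F {x : EuclideanSpace ℝ (Fin p) | ∀ i, 0 ≤ x i})
    (hF0 : F 0 = 0)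
    (hmono : ∀ x x' : EuclideanSpace ℝ (Fin p),
      (∀ i, 0 ≤ x' i) → (∀ i, x' i ≤ x i) → F x' ≤ F x) :
    ((∀ x x' : EuclideanSpace ℝ (Fin p),
        (∀ i, 0 ≤ x i) → 0 < F x → (∀ i, 0 ≤ x' i) → 0 < F x' → x ≠ x' →
        ∀ t : ℝ, t ∈ Ioo (0 : ℝ) 1 →
          min (F x) (F x') < F (t • x + (1 - t) • x')) →
      ∀ γ : ℝ, 0 < γ → (levelSet F γ).Nonempty →
        ∀ y : EuclideanSpace ℝ (Fin p), (∀ i, y i < 0) → SigmaDiffAtE (levelSet F γ) y) ∧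
    ((∀ x x' : EuclideanSpace ℝ (Fin p),
        (∀ i, 0 ≤ x' i) → (∀ i, x' i ≤ x i) → x ≠ x' → 0 < F x' → F x' < F x) →
      (∀ γ : ℝ, 0 < γ → (levelSet F γ).Nonempty →
        ∀ y : EuclideanSpace ℝ (Fin p), (∀ i, y i < 0) → SigmaDiffAtE (levelSet F γ) y) →
      ∀ x x' : EuclideanSpace ℝ (Fin p), (∀ i, 0 ≤ x i) → (∀ i, 0 ≤ x' i) →
        ∀ t : ℝ, t ∈ Icc (0 : ℝ) 1 →
          min (F x) (F x') ≤ F (t • x + (1 - t) • x')) := by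
  constructor
  · intro hsqc γ hγ hne y hy
    exact Stmt19.partA (by omega) hFcont hF0 hsqc hγ hne hy
  · intro hsm hdiff x x' hx hx' t ht
    exact Stmt19.partB hp hFnonneg hFcont hsm hdiff x x' hx hx' t ht
end
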